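/- arXiv:1807.03997 — 10 statements merged into one kernel-verified Lean document; each statement's English description precedes it below -/
import Mathlib

section
/- Let W be a nonnegative random variable on a probability space and let q ∈ (0,1]. Assume that for every u ≥ 0 one has P(W ≥ u^q) = e^{−u}. Then for every u ≥ 1: E[W · 1_{W ≥ u^q}] ≤ 2 u^q e^{−u} and E[W² · 1_{W ≥ u^q}] ≤ 5 u^{2q} e^{−u}. -/
open MeasureTheory Real Set
open scoped ENNReal NNReal

private lemma Jval (n : ℕ) : ∫ t in Ioi (0:ℝ), t ^ n * exp (-t) = (n.factorial : ℝ) := by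
  have h := Real.Gamma_eq_integral (s := n + 1) (by positivity)
  rw [Real.Gamma_nat_eq_factorial] at h
  rw [h]
  apply setIntegral_congr_fun measurableSet_Ioi
  intro x hx
  simp only [add_sub_cancel_right, Real.rpow_natCast]
  ring

private lemma Jint (n : ℕ) : IntegrableOn (fun t => t ^ n * exp (-t)) (Ioi (0:ℝ)) := by
  have h := Real.GammaIntegral_convergent (s := n + 1) (by positivity)
  apply h.congr_fun ?_ measurableSet_Ioi
  intro x hx
  simp only [add_sub_cancel_right, Real.rpow_natCast]
  ring

private lemma hg1int : IntegrableOn (fun t => (1 + t) * exp (-t)) (Ioi (0:ℝ)) := by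
  have h1 : Integrable (fun t : ℝ => t ^ 0 * exp (-t) + t ^ 1 * exp (-t))
      (volume.restrict (Ioi 0)) := (Jint 0).add (Jint 1)
  exact h1.congr (Filter.Eventually.of_forall fun x => by simp; ring)

private lemma hg1val : ∫ t in Ioi (0:ℝ), (1 + t) * exp (-t) = 2 := by
  have h : ∀ x ∈ Ioi (0:ℝ), (1 + x) * exp (-x) = x ^ 0 * exp (-x) + x ^ 1 * exp (-x) := by
    intro x hx; simp; ring
  rw [setIntegral_congr_fun measurableSet_Ioi h, integral_add (Jint 0) (Jint 1), Jval 0, Jval 1]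
  norm_num

private lemma hg2int : IntegrableOn (fun t => (1 + t) ^ 2 * exp (-t)) (Ioi (0:ℝ)) := by
  have h1 : Integrable (fun t : ℝ => (t ^ 0 * exp (-t) + 2 * (t ^ 1 * exp (-t))) + t ^ 2 * exp (-t))
      (volume.restrict (Ioi 0)) := ((Jint 0).add ((Jint 1).const_mul 2)).add (Jint 2)
  exact h1.congr (Filter.Eventually.of_forall fun x => by simp; ring)

private lemma hg2val : ∫ t in Ioi (0:ℝ), (1 + t) ^ 2 * exp (-t) = 5 := by
  have h1 : Integrable (fun t : ℝ => t ^ 0 * exp (-t) + 2 * (t ^ 1 * exp (-t)))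
      (volume.restrict (Ioi 0)) := (Jint 0).add ((Jint 1).const_mul 2)
  have h : ∀ x ∈ Ioi (0:ℝ), (1 + x) ^ 2 * exp (-x)
      = (x ^ 0 * exp (-x) + 2 * (x ^ 1 * exp (-x))) + x ^ 2 * exp (-x) := by
    intro x hx; simp; ring
  rw [setIntegral_congr_fun measurableSet_Ioi h, integral_add h1 (Jint 2),
    integral_add (Jint 0) ((Jint 1).const_mul 2), integral_const_mul, Jval 0, Jval 1, Jval 2]
  norm_num

set_option maxHeartbeats 1000000 in
private lemma tail_bound (u p c : ℝ) (φ : ℝ → ℝ) (hu : 1 ≤ u) (hp0 : 0 ≤ p)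
    (hφint : IntegrableOn (fun t => φ t * exp (-t)) (Ioi (0:ℝ)))
    (hφval : ∫ t in Ioi (0:ℝ), φ t * exp (-t) = c)
    (hφb : ∀ t : ℝ, 0 ≤ t → (1 + t) ^ p ≤ φ t) :
    ∫ x in Ici u, exp (-x) * x ^ p ≤ c * u ^ p * exp (-u) := by
  have hT : MeasurePreserving (fun x : ℝ => x + -u) volume volume :=
    measurePreserving_add_right volume (-u)
  have hTe : MeasurableEmbedding (fun x : ℝ => x + -u) :=
    (MeasurableEquiv.addRight (-u)).measurableEmbedding
  have hpre : (fun x : ℝ => x + -u) ⁻¹' (Ioi 0) = Ioi u := by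
    ext x; simp only [Set.mem_preimage, Set.mem_Ioi]
    constructor <;> intro h <;> linarith
  have hcomp : IntegrableOn (fun x => φ (x + -u) * exp (-(x + -u))) (Ioi u) := by
    have h0 : IntegrableOn ((fun t => φ t * exp (-t)) ∘ (fun x : ℝ => x + -u))
        ((fun x : ℝ => x + -u) ⁻¹' (Ioi 0)) volume :=
      (hT.integrableOn_comp_preimage hTe).mpr hφint
    rw [hpre] at h0
    exact h0
  have hval : ∫ x in Ioi u, φ (x + -u) * exp (-(x + -u)) = c := by
    have h0 := hT.setIntegral_preimage_emb hTe (fun t => φ t * exp (-t)) (Ioi 0)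
    rw [hpre] at h0
    rw [h0, hφval]
  have hint1 : IntegrableOn (fun x => exp (-x) * x ^ p) (Ioi u) := by
    have h := Real.GammaIntegral_convergent (s := p + 1) (by positivity)
    have h2 : IntegrableOn (fun x : ℝ => exp (-x) * x ^ p) (Ioi 0) := by
      apply h.congr_fun ?_ measurableSet_Ioi
      intro x hx
      simp [add_sub_cancel_right]
    exact h2.mono_set (Ioi_subset_Ioi (by linarith))
  have hpt : ∀ x ∈ Ioi u, exp (-x) * x ^ p
      ≤ (u ^ p * exp (-u)) * (φ (x + -u) * exp (-(x + -u))) := by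
    intro x hx
    have hxu : u < x := hx
    have ht0 : 0 ≤ x + -u := by linarith
    have hx0 : (0:ℝ) ≤ x := by linarith
    have h1 : x ^ p ≤ u ^ p * φ (x + -u) := by
      calc x ^ p ≤ (u * (1 + (x + -u))) ^ p := by
            apply Real.rpow_le_rpow hx0 ?_ hp0
            nlinarith
        _ = u ^ p * (1 + (x + -u)) ^ p :=
            Real.mul_rpow (by linarith) (by linarith)
        _ ≤ u ^ p * φ (x + -u) := by
            have := hφb _ ht0
            have hup : (0:ℝ) ≤ u ^ p := Real.rpow_nonneg (by linarith) _
            nlinarith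
    have hexp : exp (-x) = exp (-u) * exp (-(x + -u)) := by
      rw [← Real.exp_add]; congr 1; ring
    calc exp (-x) * x ^ p = (exp (-u) * exp (-(x + -u))) * x ^ p := by rw [hexp]
      _ ≤ (exp (-u) * exp (-(x + -u))) * (u ^ p * φ (x + -u)) := by
          apply mul_le_mul_of_nonneg_left h1 (by positivity)
      _ = (u ^ p * exp (-u)) * (φ (x + -u) * exp (-(x + -u))) := by ring
  calc ∫ x in Ici u, exp (-x) * x ^ p = ∫ x in Ioi u, exp (-x) * x ^ p :=
        integral_Ici_eq_integral_Ioi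
    _ ≤ ∫ x in Ioi u, (u ^ p * exp (-u)) * (φ (x + -u) * exp (-(x + -u))) :=
        setIntegral_mono_on hint1 (hcomp.const_mul _) measurableSet_Ioi hpt
    _ = (u ^ p * exp (-u)) * ∫ x in Ioi u, φ (x + -u) * exp (-(x + -u)) :=
        integral_const_mul _ _
    _ = c * u ^ p * exp (-u) := by rw [hval]; ring
set_option maxHeartbeats 1000000 in
/-- Moment bounds for the tail of a random variable with subpolynomial tails:
if `P(W ≥ u^q) = e^{-u}` for all `u ≥ 0`, then for `u ≥ 1`,
`E[W 1_{W ≥ u^q}] ≤ 2 u^q e^{-u}` and `E[W² 1_{W ≥ u^q}] ≤ 5 u^{2q} e^{-u}`. -/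
theorem stmt0 {Ω : Type*} [MeasurableSpace Ω] (P : Measure Ω) [IsProbabilityMeasure P]
    (W : Ω → ℝ) (hWmeas : Measurable W) (hWnn : ∀ ω, 0 ≤ W ω)
    (q : ℝ) (hq0 : 0 < q) (hq1 : q ≤ 1)
    (hlaw : ∀ u : ℝ, 0 ≤ u → P {ω | u ^ q ≤ W ω} = ENNReal.ofReal (Real.exp (-u))) :
    ∀ u : ℝ, 1 ≤ u →
      (∫ ω in {ω | u ^ q ≤ W ω}, W ω ∂P) ≤ 2 * u ^ q * Real.exp (-u) ∧
      (∫ ω in {ω | u ^ q ≤ W ω}, (W ω) ^ 2 ∂P) ≤ 5 * u ^ (2 * q) * Real.exp (-u) := by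
  set E : Ω → ℝ := fun ω => W ω ^ (q⁻¹) with hEdef
  have hE : Measurable E := by fun_prop
  have h0E : ∀ ω, 0 ≤ E ω := fun ω => Real.rpow_nonneg (hWnn ω) _
  have hEset : ∀ v : ℝ, 0 ≤ v → {ω | v ^ q ≤ W ω} = E ⁻¹' (Ici v) := by
    intro v hv
    ext ω
    simp only [Set.mem_setOf_eq, Set.mem_preimage, Set.mem_Ici, hEdef]
    exact (Real.le_rpow_inv_iff_of_pos hv (hWnn ω) hq0).symm
  set ν : Measure ℝ :=
    (volume.restrict (Ioi (0:ℝ))).withDensity (fun x => ((exp (-x)).toNNReal : ℝ≥0∞)) with hνdef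
  have hνIci : ∀ b : ℝ, 0 ≤ b →
      (∫⁻ x in Ioi b, ((exp (-x)).toNNReal : ℝ≥0∞)) = ENNReal.ofReal (exp (-b)) := by
    intro b _
    have hcoe : ∀ r : ℝ, ((r.toNNReal : ℝ≥0∞)) = ENNReal.ofReal r := fun r => rfl
    have hint : Integrable (fun x => exp (-x)) (volume.restrict (Ioi b)) := by
      have := exp_neg_integrableOn_Ioi b (b := 1) zero_lt_one
      simpa [IntegrableOn] using this
    simp only [hcoe]
    rw [← ofReal_integral_eq_lintegral_ofReal hint
      (Filter.Eventually.of_forall fun x => (exp_pos _).le), integral_exp_neg_Ioi]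
  have hmap : Measure.map E P = ν := by
    have : IsProbabilityMeasure (Measure.map E P) := Measure.isProbabilityMeasure_map hE.aemeasurable
    refine Measure.ext_of_Ici _ _ (fun a => ?_)
    rw [Measure.map_apply hE measurableSet_Ici]
    have hEa : E ⁻¹' (Ici a) = E ⁻¹' (Ici (a ⊔ 0)) := by
      ext ω
      simp only [Set.mem_preimage, Set.mem_Ici, sup_le_iff]
      exact ⟨fun h => ⟨h, h0E ω⟩, fun h => h.1⟩
    rw [hEa, ← hEset _ le_sup_right, hlaw _ le_sup_right]
    -- compute ν (Ici a)
    rw [hνdef, withDensity_apply _ measurableSet_Ici, Measure.restrict_restrict measurableSet_Ici]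
    have hae : (Ici a ∩ Ioi 0 : Set ℝ) =ᵐ[volume] (Ioi (a ⊔ 0) : Set ℝ) := by
      have h1 : (Ici a ∩ Ioi 0 : Set ℝ) =ᵐ[volume] (Ici a ∩ Ici 0 : Set ℝ) :=
        ae_eq_set_inter (Filter.EventuallyEq.refl _ _) Ioi_ae_eq_Ici
      rw [Set.Ici_inter_Ici] at h1
      exact h1.trans Ioi_ae_eq_Ici.symm
    rw [setLIntegral_congr hae, hνIci _ le_sup_right]
  have transfer : ∀ u : ℝ, 1 ≤ u → ∀ p : ℝ,
      ∫ x in Ici u, x ^ p ∂(Measure.map E P) = ∫ x in Ici u, exp (-x) * x ^ p := by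
    intro u hu p
    rw [hmap, hνdef,
      setIntegral_withDensity_eq_setIntegral_smul (by fun_prop) _ measurableSet_Ici,
      Measure.restrict_restrict measurableSet_Ici,
      show Ici u ∩ Ioi (0:ℝ) = Ici u from
        Set.inter_eq_left.mpr (fun x hx => lt_of_lt_of_le zero_lt_one (le_trans hu hx))]
    apply setIntegral_congr_fun measurableSet_Ici
    intro x hx
    simp [NNReal.smul_def, Real.coe_toNNReal _ (exp_nonneg _)]
  intro u hu
  have hu0 : (0:ℝ) ≤ u := by linarith
  have hset : {ω | u ^ q ≤ W ω} = E ⁻¹' (Ici u) := hEset u hu0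
  constructor
  · have hW1 : ∀ ω, W ω = E ω ^ q := by
      intro ω
      rw [hEdef]
      rw [← Real.rpow_mul (hWnn ω) q⁻¹ q, inv_mul_cancel₀ hq0.ne', Real.rpow_one]
    calc ∫ ω in {ω | u ^ q ≤ W ω}, W ω ∂P
        = ∫ ω in E ⁻¹' (Ici u), E ω ^ q ∂P := by
          rw [hset]
          exact setIntegral_congr_fun (hE measurableSet_Ici) (fun ω _ => hW1 ω)
      _ = ∫ x in Ici u, x ^ q ∂(Measure.map E P) :=
          (setIntegral_map (f := fun x : ℝ => x ^ q) measurableSet_Ici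
            (by fun_prop : Measurable fun x : ℝ => x ^ q).aestronglyMeasurable
            hE.aemeasurable).symm
      _ = ∫ x in Ici u, exp (-x) * x ^ q := transfer u hu q
      _ ≤ 2 * u ^ q * exp (-u) := by
          apply tail_bound u q 2 (fun t => 1 + t) hu hq0.le hg1int hg1val
          intro t ht
          calc (1 + t) ^ q ≤ (1 + t) ^ (1:ℝ) :=
                Real.rpow_le_rpow_of_exponent_le (by linarith) hq1
            _ = 1 + t := Real.rpow_one _
  · have hW2 : ∀ ω, W ω ^ 2 = E ω ^ (2 * q) := by
      intro ω
      rw [hEdef]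
      rw [← Real.rpow_mul (hWnn ω) q⁻¹ (2 * q),
        show q⁻¹ * (2 * q) = 2 by field_simp,
        show (2:ℝ) = ((2:ℕ):ℝ) by norm_cast, Real.rpow_natCast]
    calc ∫ ω in {ω | u ^ q ≤ W ω}, W ω ^ 2 ∂P
        = ∫ ω in E ⁻¹' (Ici u), E ω ^ (2 * q) ∂P := by
          rw [hset]
          exact setIntegral_congr_fun (hE measurableSet_Ici) (fun ω _ => hW2 ω)
      _ = ∫ x in Ici u, x ^ (2 * q) ∂(Measure.map E P) :=
          (setIntegral_map (f := fun x : ℝ => x ^ (2 * q)) measurableSet_Ici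
            (by fun_prop : Measurable fun x : ℝ => x ^ (2 * q)).aestronglyMeasurable
            hE.aemeasurable).symm
      _ = ∫ x in Ici u, exp (-x) * x ^ (2 * q) := transfer u hu (2 * q)
      _ ≤ 5 * u ^ (2 * q) * exp (-u) := by
          apply tail_bound u (2 * q) 5 (fun t => (1 + t) ^ 2) hu (by positivity) hg2int hg2val
          intro t ht
          calc (1 + t) ^ (2 * q) ≤ (1 + t) ^ (2:ℝ) := by
                apply Real.rpow_le_rpow_of_exponent_le (by linarith)
                linarith
            _ = (1 + t) ^ 2 := Real.rpow_two _
end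

section
/- Let (𝒴, 𝒜, λ) be a probability space and f : 𝒴 → [0,∞) a measurable function with ∫ f dλ = 1. Let μ be the measure with density f with respect to λ. Let δ > 0 and suppose M := ∫ f^{1+δ} dλ < ∞. Then M ≥ 1; for every u ≥ 1, μ{ y : f(y) ≥ exp( ((1 + log M)/δ) · u ) } ≤ e^{−u}; and for every u ≥ 0, μ{ y : f(y) ≤ e^{−u} } ≤ e^{−u}. -/
open MeasureTheory Real

/-- If `λ` is a probability measure, `f ≥ 0` is a probability density with respect to `λ`,
`μ = f·λ`, and `M = ∫ f^{1+δ} dλ < ∞` for some `δ > 0`, then `M ≥ 1`, the density has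
subpolynomial upper tails under `μ` with constant `(1 + log M)/δ`, and subpolynomial
lower tails. -/
theorem stmt1 {Y : Type*} [MeasurableSpace Y] (lam : Measure Y) [IsProbabilityMeasure lam]
    (f : Y → ℝ) (hf : Measurable f) (hfnn : ∀ y, 0 ≤ f y)
    (hfint : ∫ y, f y ∂lam = 1)
    (δ : ℝ) (hδ : 0 < δ)
    (hM : Integrable (fun y => f y ^ (1 + δ)) lam) :
    1 ≤ ∫ y, f y ^ (1 + δ) ∂lam ∧
    (∀ u : ℝ, 1 ≤ u →
      lam.withDensity (fun y => ENNReal.ofReal (f y))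
          {y | Real.exp ((1 + Real.log (∫ y, f y ^ (1 + δ) ∂lam)) / δ * u) ≤ f y}
        ≤ ENNReal.ofReal (Real.exp (-u))) ∧
    (∀ u : ℝ, 0 ≤ u →
      lam.withDensity (fun y => ENNReal.ofReal (f y)) {y | f y ≤ Real.exp (-u)}
        ≤ ENNReal.ofReal (Real.exp (-u))) := by
  set M : ℝ := ∫ y, f y ^ (1 + δ) ∂lam with hMdef
  have hfi : Integrable f lam := by
    by_contra h
    rw [integral_undef h] at hfint
    norm_num at hfint
  have hlint : ∫⁻ y, ENNReal.ofReal (f y) ∂lam = 1 := by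
    rw [← ofReal_integral_eq_lintegral_ofReal hfi (Filter.Eventually.of_forall hfnn), hfint,
      ENNReal.ofReal_one]
  have hlintM : ∫⁻ y, ENNReal.ofReal (f y ^ (1 + δ)) ∂lam = ENNReal.ofReal M := by
    rw [← ofReal_integral_eq_lintegral_ofReal hM
      (Filter.Eventually.of_forall fun y => Real.rpow_nonneg (hfnn y) _)]
  -- Part 1
  have hM1 : 1 ≤ M := by
    have hpq : Real.HolderConjugate (1 + δ) ((1 + δ) / δ) := by
      rw [Real.holderConjugate_iff]
      constructor
      · linarith
      · field_simp
    have hH := ENNReal.lintegral_mul_le_Lp_mul_Lq lam hpq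
      (f := fun y => ENNReal.ofReal (f y)) (g := fun _ => 1)
      (hf.ennreal_ofReal.aemeasurable) aemeasurable_const
    simp only [Pi.mul_apply, mul_one, ENNReal.one_rpow, lintegral_const, measure_univ,
      ENNReal.one_rpow] at hH
    rw [hlint] at hH
    have hrw : ∀ y, (ENNReal.ofReal (f y)) ^ (1 + δ) = ENNReal.ofReal (f y ^ (1 + δ)) :=
      fun y => ENNReal.ofReal_rpow_of_nonneg (hfnn y) (by linarith)
    simp only [hrw, hlintM, mul_one] at hH
    have h1 : (1 : ENNReal) ≤ ENNReal.ofReal M := by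
      by_contra h
      push_neg at h
      exact absurd hH (not_le.mpr (ENNReal.rpow_lt_one h (by positivity)))
    have := ENNReal.one_le_ofReal.mp h1
    exact this
  have hlogM : 0 ≤ Real.log M := Real.log_nonneg hM1
  refine ⟨hM1, ?_, ?_⟩
  · -- Part 2
    intro u hu
    set c : ℝ := (1 + Real.log M) / δ * u with hc
    have hsm : MeasurableSet {y | Real.exp c ≤ f y} := measurableSet_le measurable_const hf
    rw [withDensity_apply _ hsm]
    have hbound : ∀ y ∈ {y | Real.exp c ≤ f y},
        ENNReal.ofReal (f y) ≤ ENNReal.ofReal (Real.exp (-(c * δ))) *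
          ENNReal.ofReal (f y ^ (1 + δ)) := by
      intro y hy
      simp only [Set.mem_setOf_eq] at hy
      rw [← ENNReal.ofReal_mul (Real.exp_nonneg _)]
      apply ENNReal.ofReal_le_ofReal
      have hfy : 0 < f y := lt_of_lt_of_le (Real.exp_pos c) hy
      have h1 : f y = f y ^ (1 + δ) * (f y) ^ (-δ) := by
        rw [← Real.rpow_add hfy]
        simp
      nth_rewrite 1 [h1]
      rw [mul_comm]
      apply mul_le_mul_of_nonneg_right _ (Real.rpow_nonneg hfy.le _)
      calc f y ^ (-δ) ≤ (Real.exp c) ^ (-δ) := by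
            apply Real.rpow_le_rpow_of_nonpos (Real.exp_pos c) hy (by linarith)
        _ = Real.exp (-(c * δ)) := by
            rw [← Real.exp_mul]
            ring_nf
    calc ∫⁻ y in {y | Real.exp c ≤ f y}, ENNReal.ofReal (f y) ∂lam
        ≤ ∫⁻ y in {y | Real.exp c ≤ f y},
            ENNReal.ofReal (Real.exp (-(c * δ))) * ENNReal.ofReal (f y ^ (1 + δ)) ∂lam := by
          exact setLIntegral_mono (by fun_prop) hbound
      _ ≤ ∫⁻ y, ENNReal.ofReal (Real.exp (-(c * δ))) * ENNReal.ofReal (f y ^ (1 + δ)) ∂lam :=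
          setLIntegral_le_lintegral _ _
      _ = ENNReal.ofReal (Real.exp (-(c * δ))) * ENNReal.ofReal M := by
          rw [lintegral_const_mul _ (by fun_prop), hlintM]
      _ ≤ ENNReal.ofReal (Real.exp (-u)) := by
          rw [← ENNReal.ofReal_mul (Real.exp_nonneg _)]
          apply ENNReal.ofReal_le_ofReal
          have hMpos : 0 < M := by linarith
          rw [← Real.exp_log hMpos, ← Real.exp_add]
          apply Real.exp_le_exp.mpr
          have hcδ : c * δ = (1 + Real.log M) * u := by
            rw [hc]; field_simp
          rw [hcδ]
          nlinarith
  · -- Part 3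
    intro u hu
    have hsm : MeasurableSet {y | f y ≤ Real.exp (-u)} := measurableSet_le hf measurable_const
    rw [withDensity_apply _ hsm]
    calc ∫⁻ y in {y | f y ≤ Real.exp (-u)}, ENNReal.ofReal (f y) ∂lam
        ≤ ∫⁻ _ in {y | f y ≤ Real.exp (-u)}, ENNReal.ofReal (Real.exp (-u)) ∂lam :=
          setLIntegral_mono (by fun_prop) fun y hy => ENNReal.ofReal_le_ofReal hy
      _ = ENNReal.ofReal (Real.exp (-u)) * lam {y | f y ≤ Real.exp (-u)} := by
          rw [setLIntegral_const]
      _ ≤ ENNReal.ofReal (Real.exp (-u)) * 1 := by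
          exact mul_le_mul_right prob_le_one _
      _ = ENNReal.ofReal (Real.exp (-u)) := mul_one _
end

section
/- Let K ≥ 1 be an integer, σ ∈ (0,1], 𝒴 a measurable space, π : Fin K → ℝ a probability vector with π(x) ≥ σ for all x, Q : Fin K × Fin K → ℝ a row-stochastic matrix with Q(x,x') ≥ σ for all x, x', and γ_x : 𝒴 → [0,∞) for each x ∈ Fin K. Then for every k ≥ 1 and all y₁,…,y_k ∈ 𝒴 such that p_{k−1}(y₁,…,y_{k−1}) > 0, one has σ · (Σ_{x ∈ Fin K} γ_x(y_k)) · p_{k−1}(y₁,…,y_{k−1}) ≤ p_k(y₁,…,y_k) ≤ (Σ_{x ∈ Fin K} γ_x(y_k)) · p_{k−1}(y₁,…,y_{k−1}). -/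
open Finset

/-- The sum-product density of a hidden Markov model with `K` hidden states,
initial distribution `π`, transition matrix `Q` and emission densities `γ`:
`p_m(y₁,…,y_m) = Σ_{x₁,…,x_m} π(x₁) Π_{i=1}^{m-1} Q(x_i,x_{i+1}) Π_{i=1}^m γ_{x_i}(y_i)`,
with the convention `p₀ = 1`. Observations are indexed from `0`, so `y_i = y (i-1)`. -/
noncomputable def sumProdDensity {Y : Type*} (K : ℕ) (piv : Fin K → ℝ)
    (Q : Fin K → Fin K → ℝ) (γ : Fin K → Y → ℝ) (y : ℕ → Y) : ℕ → ℝ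
  | 0 => 1
  | (m + 1) =>
      ∑ x : Fin (m + 1) → Fin K,
        piv (x 0) * (∏ i : Fin m, Q (x i.castSucc) (x i.succ)) *
          (∏ i : Fin (m + 1), γ (x i) (y i))

private def snocEquiv' (m K : ℕ) : ((Fin (m+1) → Fin K) × Fin K) ≃ (Fin (m+2) → Fin K) where
  toFun p := Fin.snoc p.1 p.2
  invFun x := (Fin.init x, x (Fin.last _))
  left_inv p := by simp [Fin.init_snoc, Fin.snoc_last]
  right_inv x := by simp [Fin.snoc_init_self]

lemma sumProdDensity_rec {Y : Type*} (K : ℕ) (piv : Fin K → ℝ)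
    (Q : Fin K → Fin K → ℝ) (γ : Fin K → Y → ℝ) (y : ℕ → Y) (m : ℕ) :
    sumProdDensity K piv Q γ y (m+2) =
      ∑ z : Fin (m+1) → Fin K,
        (piv (z 0) * (∏ i : Fin m, Q (z i.castSucc) (z i.succ)) *
          (∏ i : Fin (m+1), γ (z i) (y i))) *
        (∑ j, Q (z (Fin.last m)) j * γ j (y (m+1))) := by
  show (∑ x : Fin (m+2) → Fin K,
        piv (x 0) * (∏ i : Fin (m+1), Q (x i.castSucc) (x i.succ)) *
          (∏ i : Fin (m+2), γ (x i) (y i))) = _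
  rw [← (snocEquiv' m K).sum_comp]
  rw [Fintype.sum_prod_type]
  refine Finset.sum_congr rfl fun z _ => ?_
  rw [Finset.mul_sum]
  refine Finset.sum_congr rfl fun j _ => ?_
  have h0 : (Fin.snoc z j : Fin (m+2) → Fin K) 0 = z 0 := by
    have : (0 : Fin (m+2)) = Fin.castSucc 0 := rfl
    rw [this, Fin.snoc_castSucc]
  have hQ : (∏ i : Fin (m+1), Q ((Fin.snoc z j : Fin (m+2) → Fin K) i.castSucc)
        ((Fin.snoc z j : Fin (m+2) → Fin K) i.succ))
      = (∏ i : Fin m, Q (z i.castSucc) (z i.succ)) * Q (z (Fin.last m)) j := by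
    rw [Fin.prod_univ_castSucc]
    congr 1
    · refine Finset.prod_congr rfl fun i _ => ?_
      rw [Fin.succ_castSucc, Fin.snoc_castSucc, Fin.snoc_castSucc]
    · rw [Fin.succ_last, Fin.snoc_last, Fin.snoc_castSucc]
  have hγ : (∏ i : Fin (m+2), γ ((Fin.snoc z j : Fin (m+2) → Fin K) i) (y i))
      = (∏ i : Fin (m+1), γ (z i) (y i)) * γ j (y (m+1)) := by
    rw [Fin.prod_univ_castSucc]
    congr 1
    · exact Finset.prod_congr rfl fun i _ => by rw [Fin.snoc_castSucc, Fin.coe_castSucc]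
    · rw [Fin.snoc_last, Fin.val_last]
  simp only [snocEquiv', Equiv.coe_fn_mk, h0, hQ, hγ]
  ring

/-- Bounds for the one-step ratio of HMM densities: if the initial distribution and the
transition matrix are bounded below by `σ`, then
`σ (Σ_x γ_x(y_k)) p_{k-1} ≤ p_k ≤ (Σ_x γ_x(y_k)) p_{k-1}`. -/
theorem stmt2 {Y : Type*} (K : ℕ) (hK : 1 ≤ K) (σ : ℝ) (hσ0 : 0 < σ) (hσ1 : σ ≤ 1)
    (piv : Fin K → ℝ) (hpivsum : ∑ x, piv x = 1) (hpivσ : ∀ x, σ ≤ piv x)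
    (Q : Fin K → Fin K → ℝ) (hQnn : ∀ x x', 0 ≤ Q x x')
    (hQsum : ∀ x, ∑ x', Q x x' = 1) (hQσ : ∀ x x', σ ≤ Q x x')
    (γ : Fin K → Y → ℝ) (hγ : ∀ x y, 0 ≤ γ x y)
    (k : ℕ) (hk : 1 ≤ k) (y : ℕ → Y)
    (hpos : 0 < sumProdDensity K piv Q γ y (k - 1)) :
    σ * (∑ x, γ x (y (k - 1))) * sumProdDensity K piv Q γ y (k - 1)
        ≤ sumProdDensity K piv Q γ y k ∧
      sumProdDensity K piv Q γ y k
        ≤ (∑ x, γ x (y (k - 1))) * sumProdDensity K piv Q γ y (k - 1) := by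
  have hpivnn : ∀ x, 0 ≤ piv x := fun x => le_trans hσ0.le (hpivσ x)
  have hpivle : ∀ x, piv x ≤ 1 := fun x => by
    rw [← hpivsum]
    exact Finset.single_le_sum (fun i _ => hpivnn i) (mem_univ x)
  have hQle : ∀ x j, Q x j ≤ 1 := fun x j => by
    rw [← hQsum x]
    exact Finset.single_le_sum (fun i _ => hQnn x i) (mem_univ j)
  obtain ⟨n, rfl⟩ : ∃ n, k = n + 1 := ⟨k - 1, (Nat.succ_pred_eq_of_pos hk).symm⟩
  simp only [Nat.add_sub_cancel] at hpos ⊢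
  cases n with
  | zero =>
    -- base case: p_0 = 1, p_1 = ∑ j, piv j * γ j (y 0)
    have h1 : sumProdDensity K piv Q γ y 1 = ∑ j, piv j * γ j (y 0) := by
      show (∑ x : Fin 1 → Fin K, piv (x 0) * (∏ i : Fin 0, Q (x i.castSucc) (x i.succ)) *
          (∏ i : Fin 1, γ (x i) (y i))) = _
      rw [← (Equiv.funUnique (Fin 1) (Fin K)).symm.sum_comp]
      simp
    have h0 : sumProdDensity K piv Q γ y 0 = 1 := rfl
    rw [h0, h1, mul_one, mul_one]
    constructor
    · rw [mul_comm σ, Finset.sum_mul]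
      exact Finset.sum_le_sum fun j _ => by
        rw [mul_comm]
        exact mul_le_mul_of_nonneg_right (hpivσ j) (hγ j _)
    · exact Finset.sum_le_sum fun j _ =>
        le_of_eq_of_le (mul_comm _ _) (by
          calc γ j (y 0) * piv j ≤ γ j (y 0) * 1 :=
                mul_le_mul_of_nonneg_left (hpivle j) (hγ j _)
            _ = γ j (y 0) := mul_one _)
  | succ m =>
    rw [sumProdDensity_rec]
    have hTnn : ∀ z : Fin (m+1) → Fin K,
        0 ≤ piv (z 0) * (∏ i : Fin m, Q (z i.castSucc) (z i.succ)) *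
          (∏ i : Fin (m+1), γ (z i) (y i)) := fun z =>
      mul_nonneg (mul_nonneg (hpivnn _) (Finset.prod_nonneg fun i _ => hQnn _ _))
        (Finset.prod_nonneg fun i _ => hγ _ _)
    have hinner_lo : ∀ x0 : Fin K,
        σ * ∑ x, γ x (y (m+1)) ≤ ∑ j, Q x0 j * γ j (y (m+1)) := fun x0 => by
      rw [Finset.mul_sum]
      exact Finset.sum_le_sum fun j _ =>
        mul_le_mul_of_nonneg_right (hQσ x0 j) (hγ j _)
    have hinner_hi : ∀ x0 : Fin K,
        (∑ j, Q x0 j * γ j (y (m+1))) ≤ ∑ x, γ x (y (m+1)) := fun x0 =>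
      Finset.sum_le_sum fun j _ => by
        calc Q x0 j * γ j (y (m+1)) ≤ 1 * γ j (y (m+1)) :=
              mul_le_mul_of_nonneg_right (hQle x0 j) (hγ j _)
          _ = γ j (y (m+1)) := one_mul _
    have hp : sumProdDensity K piv Q γ y (m+1) =
        ∑ z : Fin (m+1) → Fin K,
          piv (z 0) * (∏ i : Fin m, Q (z i.castSucc) (z i.succ)) *
            (∏ i : Fin (m+1), γ (z i) (y i)) := rfl
    constructor
    · rw [hp, mul_comm (σ * _), Finset.sum_mul]
      exact Finset.sum_le_sum fun z _ =>
        mul_le_mul_of_nonneg_left (hinner_lo _) (hTnn z)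
    · rw [hp, mul_comm, Finset.sum_mul]
      exact Finset.sum_le_sum fun z _ =>
        mul_le_mul_of_nonneg_left (hinner_hi _) (hTnn z)
end

section
/- Let λ be a measure on a measurable space 𝒴, S a finite set, (p_x)_{x ∈ S} and (p*_x)_{x ∈ S} probability vectors on S, and for each x ∈ S let g_x, g*_x : 𝒴 → [0,∞) be measurable functions with ∫ g_x dλ = 1 and ∫ g*_x dλ = 1. Then ∫ ( √(Σ_{x ∈ S} p*_x g*_x(y)) − √(Σ_{x ∈ S} p_x g_x(y)) )² dλ(y) ≤ 2 Σ_{x ∈ S} ∫ ( √(g*_x(y)) − √(g_x(y)) )² dλ(y) + 2 Σ_{x ∈ S} ( √(p*_x) − √(p_x) )². -/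
open MeasureTheory Real Finset

/-- Hellinger distance of sums is bounded by the sum of componentwise distances. -/
lemma aux_sqrt_sum {S : Type*} [Fintype S] (a b : S → ℝ) (ha : ∀ x, 0 ≤ a x)
    (hb : ∀ x, 0 ≤ b x) :
    (Real.sqrt (∑ x, a x) - Real.sqrt (∑ x, b x)) ^ 2
      ≤ ∑ x, (Real.sqrt (a x) - Real.sqrt (b x)) ^ 2 := by
  have hA : (0:ℝ) ≤ ∑ x, a x := Finset.sum_nonneg fun x _ => ha x
  have hB : (0:ℝ) ≤ ∑ x, b x := Finset.sum_nonneg fun x _ => hb x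
  have hCS := Real.sum_sqrt_mul_sqrt_le (f := a) (g := b) Finset.univ ha hb
  have expand : ∀ x, (Real.sqrt (a x) - Real.sqrt (b x)) ^ 2
      = a x + b x - 2 * (Real.sqrt (a x) * Real.sqrt (b x)) := by
    intro x
    rw [sub_sq, Real.sq_sqrt (ha x), Real.sq_sqrt (hb x)]; ring
  rw [Finset.sum_congr rfl fun x _ => expand x, Finset.sum_sub_distrib,
    Finset.sum_add_distrib, ← Finset.mul_sum, sub_sq,
    Real.sq_sqrt hA, Real.sq_sqrt hB]
  linarith

/-- The squared Hellinger distance between two finite mixtures is controlled by the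
squared Hellinger distances between the component densities and between the weight
vectors. -/
theorem stmt5 {Y : Type*} [MeasurableSpace Y] (lam : Measure Y)
    {S : Type*} [Fintype S]
    (p pstar : S → ℝ) (hp : ∀ x, 0 ≤ p x) (hps : ∀ x, 0 ≤ pstar x)
    (hpsum : ∑ x, p x = 1) (hpssum : ∑ x, pstar x = 1)
    (g gstar : S → Y → ℝ) (hg : ∀ x, Measurable (g x)) (hgs : ∀ x, Measurable (gstar x))
    (hgnn : ∀ x y, 0 ≤ g x y) (hgsnn : ∀ x y, 0 ≤ gstar x y)
    (hgint : ∀ x, ∫ y, g x y ∂lam = 1) (hgsint : ∀ x, ∫ y, gstar x y ∂lam = 1) :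
    ∫ y, (Real.sqrt (∑ x, pstar x * gstar x y) - Real.sqrt (∑ x, p x * g x y)) ^ 2 ∂lam
      ≤ 2 * ∑ x, ∫ y, (Real.sqrt (gstar x y) - Real.sqrt (g x y)) ^ 2 ∂lam
        + 2 * ∑ x, (Real.sqrt (pstar x) - Real.sqrt (p x)) ^ 2 := by
  -- basic integrability
  have hint_g : ∀ x, Integrable (g x) lam := by
    intro x; by_contra h
    have := hgint x
    rw [integral_undef h] at this; norm_num at this
  have hint_gs : ∀ x, Integrable (gstar x) lam := by
    intro x; by_contra h
    have := hgsint x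
    rw [integral_undef h] at this; norm_num at this
  have hple : ∀ x, p x ≤ 1 := by
    intro x
    calc p x ≤ ∑ z, p z := Finset.single_le_sum (fun z _ => hp z) (Finset.mem_univ x)
      _ = 1 := hpsum
  -- the component Hellinger integrands
  have hφmeas : ∀ x, Measurable fun y => (Real.sqrt (gstar x y) - Real.sqrt (g x y)) ^ 2 := by
    intro x; fun_prop
  have hφint : ∀ x, Integrable (fun y => (Real.sqrt (gstar x y) - Real.sqrt (g x y)) ^ 2) lam := by
    intro x
    refine Integrable.mono' (((hint_gs x).const_mul 2).add ((hint_g x).const_mul 2))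
      (hφmeas x).aestronglyMeasurable (ae_of_all _ fun y => ?_)
    have h1 := Real.sq_sqrt (hgsnn x y)
    have h2 := Real.sq_sqrt (hgnn x y)
    rw [Real.norm_eq_abs, abs_of_nonneg (sq_nonneg _)]
    simp only [Pi.add_apply]
    nlinarith [sq_nonneg (Real.sqrt (gstar x y) + Real.sqrt (g x y))]
  have hψint : ∀ x, Integrable
      (fun y => (Real.sqrt (pstar x) - Real.sqrt (p x)) ^ 2 * gstar x y) lam :=
    fun x => (hint_gs x).const_mul _
  -- the dominating function
  set B : Y → ℝ := fun y => 2 * ∑ x, (Real.sqrt (gstar x y) - Real.sqrt (g x y)) ^ 2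
      + 2 * ∑ x, (Real.sqrt (pstar x) - Real.sqrt (p x)) ^ 2 * gstar x y with hB
  have hBint : Integrable B lam :=
    ((integrable_finset_sum _ fun x _ => hφint x).const_mul 2).add
      ((integrable_finset_sum _ fun x _ => hψint x).const_mul 2)
  -- pointwise bound
  have hpt : ∀ y, (Real.sqrt (∑ x, pstar x * gstar x y)
      - Real.sqrt (∑ x, p x * g x y)) ^ 2 ≤ B y := by
    intro y
    set u := Real.sqrt (∑ x, pstar x * gstar x y)
    set v := Real.sqrt (∑ x, p x * gstar x y)
    set w := Real.sqrt (∑ x, p x * g x y)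
    have htri : (u - w) ^ 2 ≤ 2 * (u - v) ^ 2 + 2 * (v - w) ^ 2 := by
      nlinarith [sq_nonneg (u - 2 * v + w)]
    have h1 : (u - v) ^ 2 ≤ ∑ x, (Real.sqrt (pstar x) - Real.sqrt (p x)) ^ 2 * gstar x y := by
      have := aux_sqrt_sum (fun x => pstar x * gstar x y) (fun x => p x * gstar x y)
        (fun x => mul_nonneg (hps x) (hgsnn x y)) (fun x => mul_nonneg (hp x) (hgsnn x y))
      refine this.trans_eq (Finset.sum_congr rfl fun x _ => ?_)
      rw [Real.sqrt_mul (hps x), Real.sqrt_mul (hp x), ← sub_mul, mul_pow,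
        Real.sq_sqrt (hgsnn x y)]
    have h2 : (v - w) ^ 2 ≤ ∑ x, (Real.sqrt (gstar x y) - Real.sqrt (g x y)) ^ 2 := by
      have h2a := aux_sqrt_sum (fun x => p x * gstar x y) (fun x => p x * g x y)
        (fun x => mul_nonneg (hp x) (hgsnn x y)) (fun x => mul_nonneg (hp x) (hgnn x y))
      refine h2a.trans ?_
      refine Finset.sum_le_sum fun x _ => ?_
      rw [Real.sqrt_mul (hp x), Real.sqrt_mul (hp x), ← mul_sub, mul_pow,
        Real.sq_sqrt (hp x)]
      exact mul_le_of_le_one_left (sq_nonneg _) (hple x)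
    simp only [hB]
    nlinarith
  -- conclude
  calc ∫ y, (Real.sqrt (∑ x, pstar x * gstar x y)
        - Real.sqrt (∑ x, p x * g x y)) ^ 2 ∂lam
      ≤ ∫ y, B y ∂lam :=
        integral_mono_of_nonneg (ae_of_all _ fun y => sq_nonneg _) hBint (ae_of_all _ hpt)
    _ = 2 * ∑ x, ∫ y, (Real.sqrt (gstar x y) - Real.sqrt (g x y)) ^ 2 ∂lam
        + 2 * ∑ x, (Real.sqrt (pstar x) - Real.sqrt (p x)) ^ 2 := by
        rw [hB, integral_add ((integrable_finset_sum _ fun x _ => hφint x).const_mul 2)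
          ((integrable_finset_sum _ fun x _ => hψint x).const_mul 2),
          integral_const_mul, integral_const_mul,
          integral_finset_sum _ fun x _ => hφint x,
          integral_finset_sum _ fun x _ => hψint x]
        congr 1
        refine congrArg _ (Finset.sum_congr rfl fun x _ => ?_)
        rw [integral_const_mul, hgsint x, mul_one]
end

section
/- Let λ be a measure on a measurable space 𝒴, S a finite set, and for each x ∈ S let γ_x, g_x : 𝒴 → [0,∞) be measurable functions. Then ∫ ( max_{x ∈ S} (γ_x(y) − g_x(y))² ) / ( max( Σ_{x ∈ S} γ_x(y), Σ_{x ∈ S} g_x(y) ) ) dλ(y) ≤ 4 Σ_{x ∈ S} ∫ ( √(γ_x(y)) − √(g_x(y)) )² dλ(y), where the integrand on the left is taken to be 0 at points where both sums vanish (convention 0/0 = 0). -/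
open MeasureTheory Real Finset
open scoped ENNReal

private lemma key {a b M : ℝ} (ha : 0 ≤ a) (hb : 0 ≤ b) (haM : a ≤ M) (hbM : b ≤ M) :
    (a - b) ^ 2 ≤ 4 * M * (Real.sqrt a - Real.sqrt b) ^ 2 := by
  have hsa := Real.sq_sqrt ha
  have hsb := Real.sq_sqrt hb
  have h1 : 0 ≤ Real.sqrt a := Real.sqrt_nonneg a
  have h2 : 0 ≤ Real.sqrt b := Real.sqrt_nonneg b
  nlinarith [sq_nonneg (Real.sqrt a - Real.sqrt b), sq_nonneg (Real.sqrt a + Real.sqrt b),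
    mul_nonneg h1 h2, sq_nonneg (a - b),
    mul_nonneg (mul_nonneg h1 h2) (sq_nonneg (Real.sqrt a - Real.sqrt b))]

/-- `∫ (max_x (γ_x - g_x)²) / (max(Σ_x γ_x, Σ_x g_x)) dλ ≤ 4 Σ_x ∫ (√γ_x - √g_x)² dλ`,
with the convention `0/0 = 0` (which is Lean's convention for division by zero). -/
theorem stmt6 {Y : Type*} [MeasurableSpace Y] (lam : Measure Y)
    {S : Type*} [Fintype S] [Nonempty S]
    (γ g : S → Y → ℝ) (hγ : ∀ x, Measurable (γ x)) (hg : ∀ x, Measurable (g x))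
    (hγnn : ∀ x y, 0 ≤ γ x y) (hgnn : ∀ x y, 0 ≤ g x y) :
    ∫⁻ y, ENNReal.ofReal
        ((Finset.univ.sup' Finset.univ_nonempty fun x => (γ x y - g x y) ^ 2)
          / max (∑ x, γ x y) (∑ x, g x y)) ∂lam
      ≤ 4 * ∑ x, ∫⁻ y, ENNReal.ofReal ((Real.sqrt (γ x y) - Real.sqrt (g x y)) ^ 2) ∂lam := by
  have hpt : ∀ y, (Finset.univ.sup' Finset.univ_nonempty fun x => (γ x y - g x y) ^ 2)
      / max (∑ x, γ x y) (∑ x, g x y)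
      ≤ ∑ x, 4 * (Real.sqrt (γ x y) - Real.sqrt (g x y)) ^ 2 := by
    intro y
    set M : ℝ := max (∑ x, γ x y) (∑ x, g x y) with hM
    have hrhsnn : 0 ≤ ∑ x, 4 * (Real.sqrt (γ x y) - Real.sqrt (g x y)) ^ 2 :=
      Finset.sum_nonneg fun x _ => by positivity
    rcases le_or_gt M 0 with hM0 | hM0
    · have : M = 0 :=
        le_antisymm hM0 (le_max_iff.2 (Or.inl (Finset.sum_nonneg fun x _ => hγnn x y)))
      rw [this, div_zero]; exact hrhsnn
    · rw [div_le_iff₀ hM0]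
      apply Finset.sup'_le
      intro x _
      have hx : (γ x y - g x y) ^ 2 ≤ 4 * M * (Real.sqrt (γ x y) - Real.sqrt (g x y)) ^ 2 := by
        apply key (hγnn x y) (hgnn x y)
        · exact le_trans (Finset.single_le_sum (fun i _ => hγnn i y) (Finset.mem_univ x))
            (le_max_left _ _)
        · exact le_trans (Finset.single_le_sum (fun i _ => hgnn i y) (Finset.mem_univ x))
            (le_max_right _ _)
      refine hx.trans ?_
      have h2 : 4 * M * (Real.sqrt (γ x y) - Real.sqrt (g x y)) ^ 2
          ≤ M * ∑ x, 4 * (Real.sqrt (γ x y) - Real.sqrt (g x y)) ^ 2 := by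
        rw [mul_comm 4 M, mul_assoc]
        apply mul_le_mul_of_nonneg_left _ hM0.le
        exact Finset.single_le_sum (f := fun x => 4 * (Real.sqrt (γ x y) - Real.sqrt (g x y)) ^ 2)
          (fun i _ => by positivity) (Finset.mem_univ x)
      linarith [h2]
  calc ∫⁻ y, ENNReal.ofReal
        ((Finset.univ.sup' Finset.univ_nonempty fun x => (γ x y - g x y) ^ 2)
          / max (∑ x, γ x y) (∑ x, g x y)) ∂lam
      ≤ ∫⁻ y, ENNReal.ofReal (∑ x, 4 * (Real.sqrt (γ x y) - Real.sqrt (g x y)) ^ 2) ∂lam :=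
        lintegral_mono fun y => ENNReal.ofReal_le_ofReal (hpt y)
    _ = ∫⁻ y, ∑ x, ENNReal.ofReal (4 * (Real.sqrt (γ x y) - Real.sqrt (g x y)) ^ 2) ∂lam := by
        congr 1; ext y
        exact ENNReal.ofReal_sum_of_nonneg fun x _ => by positivity
    _ = ∑ x, ∫⁻ y, ENNReal.ofReal (4 * (Real.sqrt (γ x y) - Real.sqrt (g x y)) ^ 2) ∂lam := by
        apply lintegral_finset_sum
        intro x _
        apply ENNReal.measurable_ofReal.comp
        exact measurable_const.mul ((((hγ x).sqrt).sub ((hg x).sqrt)).pow measurable_const)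
    _ = 4 * ∑ x, ∫⁻ y, ENNReal.ofReal ((Real.sqrt (γ x y) - Real.sqrt (g x y)) ^ 2) ∂lam := by
        rw [Finset.mul_sum]
        congr 1; ext x
        rw [← lintegral_const_mul' _ _ (by norm_num : (4:ℝ≥0∞) ≠ ⊤)]
        congr 1; ext y
        rw [ENNReal.ofReal_mul (by norm_num : (0:ℝ) ≤ 4)]
        norm_num
end

section
/- Assume the bracketed sum-product setup with vectors u_j, v_j given for all j = 1,…,k, and suppose K ε ≤ 1/2 and K σ ≤ 1. Let a, b : Fin K → ℝ satisfy σ ≤ a(x) ≤ b(x) ≤ 1 and b(x) ≤ a(x) + ε for all x, and define ν(x) = a(x) α₀(x) / ( Σ_{x'} b(x') δ₀(x') ) and ω(x) = b(x) δ₀(x) / ( Σ_{x'} a(x') α₀(x') ). Then Σ_{x ∈ Fin K} |ν(x) − ω(x)| ≤ 5 (2/σ)^{k+1} ε. Moreover, for every 1 ≤ i ≤ k, defining f_i(x, x') = α_i(x') p(x,x') u_i(x') / ( Σ_{x''} δ_i(x'') q(x,x'') v_i(x'') ) and g_i(x, x') = δ_i(x') q(x,x') v_i(x') / ( Σ_{x''}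 α_i(x'') p(x,x'') u_i(x'') ), one has Σ_{x' ∈ Fin K} |f_i(x, x') − g_i(x, x')| ≤ 5 (2/σ)^{k−i+2} ε for every x ∈ Fin K. -/
open Finset Real

/-- The backward sum-product vector
`α_i(x) = Σ_{(x_{i+1},…,x_k) ∈ (Fin K)^{k-i}} Π_{j=i+1}^{k} p(x_{j−1}, x_j) u_j(x_j)`
with `x_i = x` (and the convention that the empty product equals `1` when `i = k`). -/
noncomputable def alphaVec (K k : ℕ) (p : Fin K → Fin K → ℝ) (u : ℕ → Fin K → ℝ)
    (i : ℕ) (x : Fin K) : ℝ :=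
  ∑ z : Fin (k - i) → Fin K,
    ∏ j : Fin (k - i),
      p (if (j : ℕ) = 0 then x else z ⟨(j : ℕ) - 1, lt_of_le_of_lt (Nat.sub_le _ _) j.isLt⟩)
          (z j) *
        u (i + 1 + (j : ℕ)) (z j)

/-- Generalized backward sum-product vector, with `n` factors starting at index `s`. -/
noncomputable def Avec (K : ℕ) (p : Fin K → Fin K → ℝ) (u : ℕ → Fin K → ℝ)
    (n s : ℕ) (x : Fin K) : ℝ :=
  ∑ z : Fin n → Fin K,
    ∏ j : Fin n,
      p (if (j : ℕ) = 0 then x else z ⟨(j : ℕ) - 1, lt_of_le_of_lt (Nat.sub_le _ _) j.isLt⟩)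
          (z j) *
        u (s + (j : ℕ)) (z j)

/-- Products of consecutive total masses. -/
noncomputable def WWaux (U : ℕ → ℝ) : ℕ → ℕ → ℝ
  | 0, _ => 1
  | (n + 1), s => U s * WWaux U n (s + 1)

lemma alphaVec_eq_Avec (K k : ℕ) (p : Fin K → Fin K → ℝ) (u : ℕ → Fin K → ℝ) (i : ℕ) :
    alphaVec K k p u i = Avec K p u (k - i) (i + 1) := rfl

lemma Avec_zero (K : ℕ) (p : Fin K → Fin K → ℝ) (u : ℕ → Fin K → ℝ) (s : ℕ) (x : Fin K) :
    Avec K p u 0 s x = 1 := by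
  simp [Avec]

lemma Avec_succ (K : ℕ) (p : Fin K → Fin K → ℝ) (u : ℕ → Fin K → ℝ) (n s : ℕ) (x : Fin K) :
    Avec K p u (n + 1) s x = ∑ x' : Fin K, p x x' * u s x' * Avec K p u n (s + 1) x' := by
  classical
  rw [Avec]
  rw [← (Fin.consEquiv (fun _ : Fin (n + 1) => Fin K)).sum_comp]
  rw [Fintype.sum_prod_type]
  refine Finset.sum_congr rfl fun x' _ => ?_
  rw [Avec, Finset.mul_sum]
  refine Finset.sum_congr rfl fun w _ => ?_
  rw [Fin.prod_univ_succ]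
  simp only [Fin.consEquiv_apply]
  congr 1
  refine Finset.prod_congr rfl fun j _ => ?_
  rcases j with ⟨jv, hj⟩
  cases jv with
  | zero => rfl
  | succ m =>
    simp only [Fin.succ_mk, Fin.val_mk, Nat.add_sub_cancel]
    rw [if_neg (by omega), if_neg (by omega)]
    have h1 : ∀ h, (⟨m + 1 + 1, h⟩ : Fin (n + 1)) = Fin.succ ⟨m + 1, hj⟩ := fun _ => rfl
    have h2 : ∀ h, (⟨m + 1, h⟩ : Fin (n + 1)) = Fin.succ ⟨m, by omega⟩ := fun _ => rfl
    rw [h1, h2, Fin.cons_succ, Fin.cons_succ,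
      show s + (m + 1 + 1) = s + 1 + (m + 1) from by omega]

set_option maxHeartbeats 1000000 in
lemma core_bracket (K : ℕ) (hK : 1 ≤ K) (σ ε E : ℝ) (hσ0 : 0 < σ) (hσ1 : σ ≤ 1) (hε : 0 < ε)
    (hE : 0 < E) (hKε : (K : ℝ) * ε ≤ 1 / 2)
    (p q : Fin K → Fin K → ℝ)
    (hpq : ∀ x x', σ ≤ p x x' ∧ p x x' ≤ q x x' ∧ q x x' ≤ 1 ∧ q x x' ≤ p x x' + ε)
    (u v : ℕ → Fin K → ℝ)
    (n s : ℕ)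
    (hwin : ∀ m, s ≤ m → m < s + n →
      (∀ x, 0 ≤ u m x ∧ u m x ≤ v m x ∧ v m x ≤ u m x + ε * E) ∧
      E * (1 - K * ε) ≤ ∑ x, u m x) :
    0 < WWaux (fun m => ∑ x, u m x) n s ∧
    ∀ x, 0 ≤ Avec K p u n s x ∧
      Avec K p u n s x ≤ Avec K q v n s x ∧
      σ ^ n * WWaux (fun m => ∑ x, u m x) n s ≤ Avec K p u n s x ∧
      Avec K p u n s x ≤ WWaux (fun m => ∑ x, u m x) n s ∧
      Avec K q v n s x ≤ Avec K p u n s x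
        + 3 * K * ε * (2 ^ n - 1) * WWaux (fun m => ∑ x, u m x) n s := by
  set U : ℕ → ℝ := fun m => ∑ x, u m x with hU
  induction n generalizing s with
  | zero =>
    refine ⟨one_pos, fun x => ?_⟩
    rw [Avec_zero, Avec_zero]
    show (0:ℝ) ≤ 1 ∧ (1:ℝ) ≤ 1 ∧ σ ^ 0 * 1 ≤ 1 ∧ (1:ℝ) ≤ 1 ∧
      (1:ℝ) ≤ 1 + 3 * K * ε * (2 ^ 0 - 1) * 1
    norm_num
  | succ n ih =>
    -- basic numeric facts
    have hK1 : (1:ℝ) ≤ (K:ℝ) := by exact_mod_cast hK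
    have hεK : ε ≤ (K:ℝ) * ε := by nlinarith
    have hKε0 : 0 ≤ (K:ℝ) * ε := by positivity
    -- window facts at s
    obtain ⟨huvs, hUs⟩ := hwin s le_rfl (by omega)
    have hUsE : E / 2 ≤ U s := by nlinarith
    have hUs0 : 0 < U s := by nlinarith
    -- IH at s + 1
    obtain ⟨hW0, ihx⟩ := ih (s + 1) (fun m h1 h2 => hwin m (by omega) (by omega))
    set W' : ℝ := WWaux U n (s + 1) with hW'
    set A' : Fin K → ℝ := fun x => Avec K p u n (s + 1) x with hA'
    set B' : Fin K → ℝ := fun x => Avec K q v n (s + 1) x with hB'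
    have hWW : WWaux U (n + 1) s = U s * W' := rfl
    have hWpos : 0 < WWaux U (n + 1) s := by rw [hWW]; positivity
    refine ⟨hWpos, fun x => ?_⟩
    rw [Avec_succ, Avec_succ, hWW]
    have hterm : ∀ x', σ ≤ p x x' ∧ p x x' ≤ q x x' ∧ q x x' ≤ 1 ∧ q x x' ≤ p x x' + ε :=
      hpq x
    have hA0 : ∀ x', 0 ≤ A' x' := fun x' => (ihx x').1
    have hAB : ∀ x', A' x' ≤ B' x' := fun x' => (ihx x').2.1
    have hAlo : ∀ x', σ ^ n * W' ≤ A' x' := fun x' => (ihx x').2.2.1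
    have hAhi : ∀ x', A' x' ≤ W' := fun x' => (ihx x').2.2.2.1
    have hBA : ∀ x', B' x' ≤ A' x' + 3 * K * ε * (2 ^ n - 1) * W' :=
      fun x' => (ihx x').2.2.2.2
    have hP0 : (0:ℝ) ≤ 2 ^ n - 1 := by
      have : (1:ℝ) ≤ 2 ^ n := one_le_pow₀ (by norm_num : (1:ℝ) ≤ 2)
      linarith
    have hp0 : ∀ x', 0 ≤ p x x' := fun x' => le_trans hσ0.le (hterm x').1
    have hq0 : ∀ x', 0 ≤ q x x' := fun x' => le_trans (hp0 x') (hterm x').2.1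
    have hu0 : ∀ x', 0 ≤ u s x' := fun x' => (huvs x').1
    have hv0 : ∀ x', 0 ≤ v s x' := fun x' => le_trans (hu0 x') (huvs x').2.1
    refine ⟨?_, ?_, ?_, ?_, ?_⟩
    · exact Finset.sum_nonneg fun x' _ =>
        mul_nonneg (mul_nonneg (hp0 x') (hu0 x')) (hA0 x')
    · refine Finset.sum_le_sum fun x' _ => ?_
      calc p x x' * u s x' * A' x' ≤ q x x' * v s x' * A' x' :=
            mul_le_mul_of_nonneg_right
              (mul_le_mul (hterm x').2.1 (huvs x').2.1 (hu0 x') (hq0 x')) (hA0 x')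
        _ ≤ q x x' * v s x' * B' x' :=
            mul_le_mul_of_nonneg_left (hAB x') (mul_nonneg (hq0 x') (hv0 x'))
    · calc σ ^ (n + 1) * (U s * W')
          = ∑ x', σ * u s x' * (σ ^ n * W') := by
            rw [← Finset.sum_mul, ← Finset.mul_sum]; ring
        _ ≤ ∑ x', p x x' * u s x' * A' x' := by
            refine Finset.sum_le_sum fun x' _ => ?_
            have h1 : 0 ≤ σ ^ n * W' := by positivity
            calc σ * u s x' * (σ ^ n * W') ≤ p x x' * u s x' * (σ ^ n * W') :=
                  mul_le_mul_of_nonneg_right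
                    (mul_le_mul_of_nonneg_right (hterm x').1 (hu0 x')) h1
              _ ≤ p x x' * u s x' * A' x' :=
                  mul_le_mul_of_nonneg_left (hAlo x')
                    (mul_nonneg (hp0 x') (hu0 x'))
    · calc (∑ x', p x x' * u s x' * A' x') ≤ ∑ x', u s x' * W' := by
            refine Finset.sum_le_sum fun x' _ => ?_
            calc p x x' * u s x' * A' x' ≤ 1 * u s x' * W' := by
                  refine mul_le_mul ?_ (hAhi x') (hA0 x') ?_
                  · exact mul_le_mul_of_nonneg_right
                      (le_trans (hterm x').2.1 (hterm x').2.2.1) (hu0 x')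
                  · exact le_trans (hu0 x') (le_of_eq (one_mul _).symm)
              _ = u s x' * W' := by ring
        _ = U s * W' := by rw [← Finset.sum_mul]
    · -- the difference bound
      have hstep : ∀ x', q x x' * v s x' * B' x' ≤ p x x' * u s x' * A' x'
          + (v s x' * (3 * K * ε * (2 ^ n - 1) * W') + (ε * E + ε * u s x') * W') := by
        intro x'
        have h1 : q x x' * v s x' * (B' x' - A' x') ≤ v s x' * (3 * K * ε * (2 ^ n - 1) * W') := by
          have hd0 : 0 ≤ B' x' - A' x' := by linarith [hAB x']
          have hd1 : B' x' - A' x' ≤ 3 * K * ε * (2 ^ n - 1) * W' := by linarith [hBA x']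
          calc q x x' * v s x' * (B' x' - A' x') ≤ 1 * v s x' * (B' x' - A' x') :=
                mul_le_mul_of_nonneg_right
                  (mul_le_mul_of_nonneg_right (hterm x').2.2.1 (hv0 x')) hd0
            _ = v s x' * (B' x' - A' x') := by ring
            _ ≤ v s x' * (3 * K * ε * (2 ^ n - 1) * W') :=
                mul_le_mul_of_nonneg_left hd1 (hv0 x')
        have h2 : (q x x' * v s x' - p x x' * u s x') * A' x' ≤ (ε * E + ε * u s x') * W' := by
          have hqv : q x x' * v s x' - p x x' * u s x' ≤ ε * E + ε * u s x' := by
            have e1 : q x x' * (v s x' - u s x') ≤ ε * E := by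
              have := (huvs x').2.2
              have := (huvs x').2.1
              nlinarith [(hterm x').2.2.1, hq0 x', hE.le]
            have e2 : (q x x' - p x x') * u s x' ≤ ε * u s x' := by
              nlinarith [(hterm x').2.2.2, hu0 x']
            nlinarith
          have hqv0 : 0 ≤ ε * E + ε * u s x' :=
            add_nonneg (by positivity) (mul_nonneg hε.le (hu0 x'))
          calc (q x x' * v s x' - p x x' * u s x') * A' x'
              ≤ (ε * E + ε * u s x') * A' x' := by
                rcases le_or_gt (q x x' * v s x' - p x x' * u s x') 0 with h | h
                · exact le_trans (mul_nonpos_of_nonpos_of_nonneg h (hA0 x'))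
                    (mul_nonneg hqv0 (hA0 x'))
                · exact mul_le_mul_of_nonneg_right hqv (hA0 x')
            _ ≤ (ε * E + ε * u s x') * W' := mul_le_mul_of_nonneg_left (hAhi x') hqv0
        nlinarith [h1, h2]
      have hsum : (∑ x', q x x' * v s x' * B' x')
          ≤ (∑ x', p x x' * u s x' * A' x')
            + ((∑ x', v s x') * (3 * K * ε * (2 ^ n - 1) * W')
              + (K * (ε * E) + ε * U s) * W') := by
        have := Finset.sum_le_sum (fun x' (_ : x' ∈ Finset.univ) => hstep x')
        calc (∑ x', q x x' * v s x' * B' x') ≤ _ := this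
          _ = (∑ x', p x x' * u s x' * A' x')
              + ((∑ x', v s x') * (3 * K * ε * (2 ^ n - 1) * W')
                + (K * (ε * E) + ε * U s) * W') := by
            rw [Finset.sum_add_distrib, Finset.sum_add_distrib, ← Finset.sum_mul,
              ← Finset.sum_mul, Finset.sum_add_distrib, Finset.sum_const,
              Finset.card_univ, Fintype.card_fin, ← Finset.mul_sum]
            ring
      have hV : (∑ x', v s x') ≤ (1 + 2 * (K * ε)) * U s := by
        have h1 : (∑ x', v s x') ≤ ∑ x', (u s x' + ε * E) :=
          Finset.sum_le_sum fun x' _ => (huvs x').2.2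
        have h2 : (∑ x' : Fin K, (u s x' + ε * E)) = U s + K * (ε * E) := by
          rw [Finset.sum_add_distrib, Finset.sum_const, Finset.card_univ, Fintype.card_fin]
          ring
        have h3 : (K:ℝ) * (ε * E) ≤ 2 * (K * ε) * U s := by nlinarith
        linarith
      have hscalar : (1 + 2 * (K * ε)) * (3 * (K * ε) * (2 ^ n - 1)) + (2 * (K * ε) + ε)
          ≤ 3 * (K * ε) * (2 ^ (n + 1) - 1) := by
        have h2n : (2:ℝ) ^ (n + 1) = 2 * 2 ^ n := by ring
        rw [h2n]
        generalize hgen : (K:ℝ) * ε = t at *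
        nlinarith [mul_nonneg (mul_nonneg (by linarith : (0:ℝ) ≤ 1/2 - t)
          (by linarith : (0:ℝ) ≤ t)) hP0]
      have hW'0 : 0 ≤ W' := hW0.le
      have hfinal : (∑ x', v s x') * (3 * K * ε * (2 ^ n - 1) * W')
          + (K * (ε * E) + ε * U s) * W'
          ≤ 3 * K * ε * (2 ^ (n + 1) - 1) * (U s * W') := by
        have hVc : (∑ x', v s x') * (3 * K * ε * (2 ^ n - 1) * W')
            ≤ ((1 + 2 * (K * ε)) * U s) * (3 * K * ε * (2 ^ n - 1) * W') :=
          mul_le_mul_of_nonneg_right hV (by positivity)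
        have hEc : (K:ℝ) * (ε * E) * W' ≤ 2 * (K * ε) * U s * W' := by
          have h3 : (K:ℝ) * (ε * E) ≤ 2 * (K * ε) * U s := by nlinarith
          exact mul_le_mul_of_nonneg_right h3 hW'0
        have hs2 := mul_le_mul_of_nonneg_right hscalar (mul_nonneg hUs0.le hW'0)
        have hexp : ((1 + 2 * (K * ε)) * (3 * (K * ε) * (2 ^ n - 1)) + (2 * (K * ε) + ε))
            * (U s * W')
            = ((1 + 2 * (K * ε)) * U s) * (3 * K * ε * (2 ^ n - 1) * W')
              + (2 * (K * ε) * U s * W' + ε * U s * W') := by ring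
        have hexp2 : (K * (ε * E) + ε * U s) * W' = K * (ε * E) * W' + ε * U s * W' := by
          ring
        rw [hexp] at hs2
        rw [hexp2]
        linarith [hVc, hEc, hs2]
      linarith [hsum, hfinal]

lemma ratio_lemma (SA SB M : ℝ) (h0 : 0 < SA) (h1 : SA ≤ SB) (h2 : SB - SA ≤ M * SA / 2) :
    SB / SA - SA / SB ≤ M := by
  have hSB : 0 < SB := lt_of_lt_of_le h0 h1
  have hM : 0 ≤ M := by nlinarith
  rw [div_sub_div _ _ h0.ne' hSB.ne', div_le_iff₀ (by positivity)]
  nlinarith [mul_le_mul_of_nonneg_right h2 (by linarith : (0:ℝ) ≤ SB + SA),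
    mul_nonneg (mul_nonneg hM h0.le) (sub_nonneg.2 h1)]

lemma bracket_sum {K : ℕ} (f g : Fin K → ℝ) (hfg : ∀ x, 0 ≤ f x ∧ f x ≤ g x) (M : ℝ)
    (h0 : 0 < ∑ x, f x) (h2 : (∑ x, g x) - (∑ x, f x) ≤ M * (∑ x, f x) / 2) :
    ∑ x, |f x / (∑ x', g x') - g x / (∑ x', f x')| ≤ M := by
  have h1 : (∑ x, f x) ≤ ∑ x, g x := Finset.sum_le_sum fun x _ => (hfg x).2
  have habs : ∀ x, |f x / (∑ x', g x') - g x / (∑ x', f x')|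
      = g x / (∑ x', f x') - f x / (∑ x', g x') := by
    intro x
    rw [abs_of_nonpos, neg_sub]
    have := div_le_div₀ (le_trans (hfg x).1 (hfg x).2) (hfg x).2 h0 h1
    linarith
  calc (∑ x, |f x / (∑ x', g x') - g x / (∑ x', f x')|)
      = ∑ x, (g x / (∑ x', f x') - f x / (∑ x', g x')) :=
        Finset.sum_congr rfl fun x _ => habs x
    _ = (∑ x, g x) / (∑ x', f x') - (∑ x, f x) / (∑ x', g x') := by
        rw [Finset.sum_sub_distrib, ← Finset.sum_div, ← Finset.sum_div]
    _ ≤ M := ratio_lemma _ _ _ h0 h1 h2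
set_option maxHeartbeats 1000000 in
/-- Size of the brackets `[ν, ω]` (for the initial conditional distribution of the hidden
chain) and `[f_i, g_i]` (for the forward transition operators) built from brackets of the
HMM parameters. -/
theorem stmt8 (K k : ℕ) (hK : 1 ≤ K) (hk : 1 ≤ k)
    (σ : ℝ) (hσ0 : 0 < σ) (hσ1 : σ ≤ 1) (ε : ℝ) (hε : 0 < ε) (D : ℝ)
    (p q : Fin K → Fin K → ℝ)
    (hpq : ∀ x x', σ ≤ p x x' ∧ p x x' ≤ q x x' ∧ q x x' ≤ 1 ∧ q x x' ≤ p x x' + ε)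
    (u v : ℕ → Fin K → ℝ)
    (huv : ∀ j, 1 ≤ j → j ≤ k → ∀ x,
      0 ≤ u j x ∧ u j x ≤ v j x ∧ v j x ≤ u j x + ε * Real.exp (-D))
    (husum : ∀ j, 1 ≤ j → j ≤ k → Real.exp (-D) * (1 - K * ε) ≤ ∑ x, u j x)
    (hKε : (K : ℝ) * ε ≤ 1 / 2) (hKσ : (K : ℝ) * σ ≤ 1)
    (a b : Fin K → ℝ)
    (hab : ∀ x, σ ≤ a x ∧ a x ≤ b x ∧ b x ≤ 1 ∧ b x ≤ a x + ε) :
    (∑ x, |a x * alphaVec K k p u 0 x / (∑ x', b x' * alphaVec K k q v 0 x')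
          - b x * alphaVec K k q v 0 x / (∑ x', a x' * alphaVec K k p u 0 x')|
        ≤ 5 * (2 / σ) ^ (k + 1) * ε) ∧
    (∀ i, 1 ≤ i → i ≤ k → ∀ x : Fin K,
      ∑ x', |alphaVec K k p u i x' * p x x' * u i x'
              / (∑ x'', alphaVec K k q v i x'' * q x x'' * v i x'')
            - alphaVec K k q v i x' * q x x' * v i x'
              / (∑ x'', alphaVec K k p u i x'' * p x x'' * u i x'')|
        ≤ 5 * (2 / σ) ^ (k - i + 2) * ε) := by
  have hE : (0:ℝ) < Real.exp (-D) := Real.exp_pos _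
  have hK1 : (1:ℝ) ≤ (K:ℝ) := by exact_mod_cast hK
  have h2k1 : (1:ℝ) ≤ 2 ^ k := one_le_pow₀ (by norm_num : (1:ℝ) ≤ 2)
  haveI : NeZero K := ⟨by omega⟩
  constructor
  · -- part 1
    obtain ⟨hW0, hAx⟩ := core_bracket K hK σ ε (Real.exp (-D)) hσ0 hσ1 hε hE hKε p q hpq u v
      k 1 (fun m h1 h2 => ⟨huv m h1 (by omega), husum m h1 (by omega)⟩)
    have e0 : k - 0 = k := rfl
    simp only [alphaVec_eq_Avec, e0]
    set W := WWaux (fun m => ∑ x, u m x) k 1 with hWdef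
    set A : Fin K → ℝ := fun x => Avec K p u k (0 + 1) x with hA
    set B : Fin K → ℝ := fun x => Avec K q v k (0 + 1) x with hB
    have key : ∀ x, 0 ≤ A x ∧ A x ≤ B x ∧ σ ^ k * W ≤ A x ∧ A x ≤ W ∧
        B x ≤ A x + 3 * K * ε * (2 ^ k - 1) * W := fun x => hAx x
    set C : ℝ := 3 * K * ε * (2 ^ k - 1) with hCdef
    have hC0 : 0 ≤ C := by
      have : (0:ℝ) ≤ 3 * (K:ℝ) * ε := by positivity
      rw [hCdef]; nlinarith
    set Z : ℝ := ∑ x, A x with hZdef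
    set SA : ℝ := ∑ x, a x * A x with hSA
    set SB : ℝ := ∑ x, b x * B x with hSB
    have hZ0 : 0 ≤ Z := Finset.sum_nonneg fun x _ => (key x).1
    have hZσ : σ * Z ≤ SA := by
      rw [hZdef, hSA, Finset.mul_sum]
      exact Finset.sum_le_sum fun x _ =>
        mul_le_mul_of_nonneg_right (hab x).1 (key x).1
    have hSA0 : 0 < SA := by
      rw [hSA]
      refine Finset.sum_pos (fun x _ => ?_) Finset.univ_nonempty
      have hAx0 : 0 < A x := lt_of_lt_of_le (by positivity) (key x).2.2.1
      exact mul_pos (lt_of_lt_of_le hσ0 (hab x).1) hAx0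
    have hσk0 : (0:ℝ) ≤ σ ^ k := by positivity
    have hpt : ∀ x, σ ^ k * (b x * B x) ≤
        σ ^ k * (a x * A x) + σ ^ k * ε * A x + C * (a x * A x) + C * ε * A x := by
      intro x
      obtain ⟨ha, hab1, hb1, hbae⟩ := hab x
      obtain ⟨hA0x, hABx, hAlox, hAhix, hBAx⟩ := key x
      have ha0 : 0 ≤ a x := le_trans hσ0.le ha
      have hb0 : 0 ≤ b x := le_trans ha0 hab1
      have haε0 : 0 ≤ a x + ε := by linarith
      have H1 : b x * B x ≤ b x * (A x + C * W) :=
        mul_le_mul_of_nonneg_left hBAx hb0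
      have H2 : b x * A x ≤ (a x + ε) * A x := mul_le_mul_of_nonneg_right hbae hA0x
      have H3 : b x * (C * W) ≤ (a x + ε) * (C * W) :=
        mul_le_mul_of_nonneg_right hbae (mul_nonneg hC0 hW0.le)
      have H4 : ((a x + ε) * C) * (σ ^ k * W) ≤ ((a x + ε) * C) * A x :=
        mul_le_mul_of_nonneg_left hAlox (mul_nonneg haε0 hC0)
      nlinarith [mul_le_mul_of_nonneg_left H1 hσk0, mul_le_mul_of_nonneg_left H2 hσk0,
        mul_le_mul_of_nonneg_left H3 hσk0, H4]
    have hsum1 : σ ^ k * SB ≤ σ ^ k * SA + σ ^ k * ε * Z + C * SA + C * ε * Z := by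
      calc σ ^ k * SB = ∑ x, σ ^ k * (b x * B x) := by rw [hSB, Finset.mul_sum]
        _ ≤ ∑ x, (σ ^ k * (a x * A x) + σ ^ k * ε * A x + C * (a x * A x) + C * ε * A x) :=
            Finset.sum_le_sum fun x _ => hpt x
        _ = σ ^ k * SA + σ ^ k * ε * Z + C * SA + C * ε * Z := by
            rw [Finset.sum_add_distrib, Finset.sum_add_distrib, Finset.sum_add_distrib,
              ← Finset.mul_sum, ← Finset.mul_sum, ← Finset.mul_sum, ← Finset.mul_sum,
              hSA, hZdef]
    refine bracket_sum (fun x => a x * A x) (fun x => b x * B x) ?_ _ hSA0 ?_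
    · intro x
      obtain ⟨ha, hab1, hb1, hbae⟩ := hab x
      obtain ⟨hA0x, hABx, hAlox, hAhix, hBAx⟩ := key x
      have ha0 : 0 ≤ a x := le_trans hσ0.le ha
      refine ⟨mul_nonneg ha0 hA0x, ?_⟩
      calc a x * A x ≤ b x * A x := mul_le_mul_of_nonneg_right hab1 hA0x
        _ ≤ b x * B x := mul_le_mul_of_nonneg_left hABx (le_trans ha0 hab1)
    · -- SB - SA ≤ M * SA / 2
      show SB - SA ≤ 5 * (2 / σ) ^ (k + 1) * ε * SA / 2
      have hMrw : 5 * (2 / σ) ^ (k + 1) * ε * SA / 2 = 5 * 2 ^ k * ε * SA / σ ^ (k + 1) := by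
        rw [div_pow]
        field_simp
        ring
      rw [hMrw, le_div_iff₀ (by positivity), pow_succ]
      have h5 := mul_le_mul_of_nonneg_left hsum1 hσ0.le
      have h6 : σ ^ k * ε * (σ * Z) ≤ σ ^ k * ε * SA :=
        mul_le_mul_of_nonneg_left hZσ (by positivity)
      have h7 : C * ε * (σ * Z) ≤ C * ε * SA :=
        mul_le_mul_of_nonneg_left hZσ (mul_nonneg hC0 hε.le)
      have hs : σ ^ k * ε + C * σ + C * ε ≤ 5 * 2 ^ k * ε := by
        have hσk1 : σ ^ k ≤ 1 := pow_le_one₀ hσ0.le hσ1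
        have h3e : (0:ℝ) ≤ 3 * ε * (2 ^ k - 1) := by nlinarith
        have e1 : (K * σ) * (3 * ε * (2 ^ k - 1)) ≤ 1 * (3 * ε * (2 ^ k - 1)) :=
          mul_le_mul_of_nonneg_right hKσ h3e
        have e2 : (K * ε) * (3 * ε * (2 ^ k - 1)) ≤ (1/2) * (3 * ε * (2 ^ k - 1)) :=
          mul_le_mul_of_nonneg_right hKε h3e
        have e3 : σ ^ k * ε ≤ 1 * ε := mul_le_mul_of_nonneg_right hσk1 hε.le
        rw [hCdef]
        nlinarith [e1, e2, e3, hε.le]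
      have hsSA := mul_le_mul_of_nonneg_right hs hSA0.le
      nlinarith [h5, h6, h7, hsSA]
  · -- part 2
    intro i hi1 hik x
    obtain ⟨hW1, hAx1⟩ := core_bracket K hK σ ε (Real.exp (-D)) hσ0 hσ1 hε hE hKε p q hpq u v
      (k - i) (i + 1) (fun m h1 h2 => ⟨huv m (by omega) (by omega), husum m (by omega) (by omega)⟩)
    obtain ⟨hW2, hAx2⟩ := core_bracket K hK σ ε (Real.exp (-D)) hσ0 hσ1 hε hE hKε p q hpq u v
      (k - i + 1) i (fun m h1 h2 => ⟨huv m (by omega) (by omega), husum m (by omega) (by omega)⟩)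
    simp only [alphaVec_eq_Avec]
    set W2 := WWaux (fun m => ∑ x, u m x) (k - i + 1) i with hW2def
    obtain ⟨hTA0, hTAB, hTAlo, hTAhi, hTBA⟩ := hAx2 x
    have hTA : (∑ x'', Avec K p u (k - i) (i + 1) x'' * p x x'' * u i x'')
        = Avec K p u (k - i + 1) i x := by
      rw [Avec_succ]
      exact Finset.sum_congr rfl fun x'' _ => by ring
    have hTB : (∑ x'', Avec K q v (k - i) (i + 1) x'' * q x x'' * v i x'')
        = Avec K q v (k - i + 1) i x := by
      rw [Avec_succ]
      exact Finset.sum_congr rfl fun x'' _ => by ring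
    have huvi := huv i hi1 hik
    refine bracket_sum (fun x' => Avec K p u (k - i) (i + 1) x' * p x x' * u i x')
      (fun x' => Avec K q v (k - i) (i + 1) x' * q x x' * v i x') ?_ _ ?_ ?_
    · intro x'
      obtain ⟨hA0x, hABx, _, _, _⟩ := hAx1 x'
      have hp0 : 0 ≤ p x x' := le_trans hσ0.le (hpq x x').1
      have hq0 : 0 ≤ q x x' := le_trans hp0 (hpq x x').2.1
      have hu0 : 0 ≤ u i x' := (huvi x').1
      refine ⟨mul_nonneg (mul_nonneg hA0x hp0) hu0, ?_⟩
      have hB0x : 0 ≤ Avec K q v (k - i) (i + 1) x' := le_trans hA0x hABx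
      calc Avec K p u (k - i) (i + 1) x' * p x x' * u i x'
          ≤ Avec K q v (k - i) (i + 1) x' * q x x' * u i x' :=
            mul_le_mul_of_nonneg_right
              (mul_le_mul hABx (hpq x x').2.1 hp0 hB0x) hu0
        _ ≤ Avec K q v (k - i) (i + 1) x' * q x x' * v i x' :=
            mul_le_mul_of_nonneg_left (huvi x').2.1 (mul_nonneg hB0x hq0)
    · rw [hTA]
      exact lt_of_lt_of_le (by positivity) hTAlo
    · rw [hTA, hTB]
      have hM0 : (0:ℝ) < 5 * (2 / σ) ^ (k - i + 2) * ε := by positivity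
      have hscal : 3 * K * ε * (2 ^ (k - i + 1) - 1) * σ ≤ 5 * 2 ^ (k - i + 1) * ε := by
        have h2m : (1:ℝ) ≤ 2 ^ (k - i + 1) := one_le_pow₀ (by norm_num : (1:ℝ) ≤ 2)
        have h3e : (0:ℝ) ≤ 3 * ε * (2 ^ (k - i + 1) - 1) := by nlinarith
        have e1 : (K * σ) * (3 * ε * (2 ^ (k - i + 1) - 1))
            ≤ 1 * (3 * ε * (2 ^ (k - i + 1) - 1)) := mul_le_mul_of_nonneg_right hKσ h3e
        nlinarith [e1, hε.le]
      have hMW : 3 * K * ε * (2 ^ (k - i + 1) - 1) * W2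
          ≤ 5 * (2 / σ) ^ (k - i + 2) * ε * (σ ^ (k - i + 1) * W2) / 2 := by
        have hMeq : 5 * (2 / σ) ^ (k - i + 2) * ε * (σ ^ (k - i + 1) * W2) / 2
            = 5 * 2 ^ (k - i + 1) * ε * W2 / σ := by
          rw [div_pow]
          field_simp
          ring
        rw [hMeq, le_div_iff₀ hσ0]
        calc 3 * K * ε * (2 ^ (k - i + 1) - 1) * W2 * σ
            = (3 * K * ε * (2 ^ (k - i + 1) - 1) * σ) * W2 := by ring
          _ ≤ (5 * 2 ^ (k - i + 1) * ε) * W2 :=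
              mul_le_mul_of_nonneg_right hscal hW2.le
          _ = 5 * 2 ^ (k - i + 1) * ε * W2 := by ring
      have hmono : 5 * (2 / σ) ^ (k - i + 2) * ε * (σ ^ (k - i + 1) * W2) / 2
          ≤ 5 * (2 / σ) ^ (k - i + 2) * ε * Avec K p u (k - i + 1) i x / 2 := by
        have := mul_le_mul_of_nonneg_left hTAlo hM0.le
        linarith
      linarith [hTBA, hMW, hmono]
end

section
/- Let A, B > 0 and C ≥ 1 be real numbers. Define H : (0,∞) → ℝ by H(x) = A log( max(B/x, C) ) and φ : (0,∞) → ℝ by φ(x) = x √(π A) (1 + √( log( max(B/x, C) ) )). Then for every x > 0: x² H(x) ≤ φ(x)² and ∫₀^x √(H(u)) du ≤ φ(x). -/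
open MeasureTheory Real

lemma log_integrableOn_Ioo (x : ℝ) (hx : 0 < x) :
    IntegrableOn Real.log (Set.Ioo 0 x) := by
  set m := min x 1 with hm_def
  have hm : 0 < m := lt_min hx one_pos
  have hm1 : m ≤ 1 := min_le_right _ _
  have hmx : m ≤ x := min_le_left _ _
  have h1 : IntegrableOn (fun u => -Real.log u) (Set.Ioc 0 m) := by
    apply intervalIntegral.integrableOn_deriv_of_nonneg (g := fun u => u - u * Real.log u)
    · exact (continuous_id.sub Real.continuous_mul_log).continuousOn
    · intro u hu
      have := Real.hasDerivAt_mul_log (ne_of_gt hu.1)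
      have h := (hasDerivAt_id u).sub this
      exact h.congr_deriv (by ring)
    · intro u hu
      simp only [neg_nonneg]
      exact Real.log_nonpos hu.1.le (hu.2.le.trans hm1)
  have h1' : IntegrableOn Real.log (Set.Ioc 0 m) := by
    have h := h1.neg
    simp only [Pi.neg_def, neg_neg] at h
    exact h
  have h2 : IntegrableOn Real.log (Set.Icc m x) := by
    apply ContinuousOn.integrableOn_Icc
    apply Real.continuousOn_log.mono
    intro u hu
    exact ne_of_gt (lt_of_lt_of_le hm hu.1)
  have hsub : Set.Ioo 0 x ⊆ Set.Ioc 0 m ∪ Set.Icc m x := by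
    intro u hu
    by_cases h : u ≤ m
    · exact Or.inl ⟨hu.1, h⟩
    · exact Or.inr ⟨(not_le.1 h).le, hu.2.le⟩
  exact (h1'.union h2).mono_set hsub

lemma log_integral_Ioo (x : ℝ) (hx : 0 < x) :
    ∫ u in Set.Ioo (0 : ℝ) x, Real.log u = x * Real.log x - x := by
  have hint : IntervalIntegrable Real.log volume 0 x := by
    rw [intervalIntegrable_iff_integrableOn_Ioo_of_le hx.le]
    exact log_integrableOn_Ioo x hx
  have key : ∫ u in (0:ℝ)..x, Real.log u = (x * Real.log x - x) - (0 * Real.log 0 - 0) := by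
    apply intervalIntegral.integral_eq_sub_of_hasDeriv_right_of_le hx.le
      (f := fun u => u * Real.log u - u)
    · exact (Real.continuous_mul_log.sub continuous_id).continuousOn
    · intro u hu
      have := Real.hasDerivAt_mul_log (ne_of_gt hu.1)
      have h := (this.sub (hasDerivAt_id u))
      have h2 : HasDerivAt (fun u => u * Real.log u - u) (Real.log u) u := by
        exact h.congr_deriv (by ring)
      exact h2.hasDerivWithinAt
    · exact hint
  rw [← integral_Ioc_eq_integral_Ioo, ← intervalIntegral.integral_of_le hx.le, key]
  simp

lemma sqrt_add_le' {a b : ℝ} (ha : 0 ≤ a) (hb : 0 ≤ b) :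
    Real.sqrt (a + b) ≤ Real.sqrt a + Real.sqrt b := by
  have h1 := Real.sq_sqrt ha
  have h2 := Real.sq_sqrt hb
  have h3 := Real.sqrt_nonneg a
  have h4 := Real.sqrt_nonneg b
  calc Real.sqrt (a + b) ≤ Real.sqrt ((Real.sqrt a + Real.sqrt b) ^ 2) :=
        Real.sqrt_le_sqrt (by nlinarith)
    _ = Real.sqrt a + Real.sqrt b := Real.sqrt_sq (by positivity)

/-- For `H(x) = A log(max(B/x, C))` and `φ(x) = x √(πA) (1 + √(log(max(B/x, C))))`,
one has `x² H(x) ≤ φ(x)²` and `∫₀^x √(H(u)) du ≤ φ(x)` for every `x > 0`. -/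
theorem stmt10 (A B C : ℝ) (hA : 0 < A) (hB : 0 < B) (hC : 1 ≤ C) :
    ∀ x : ℝ, 0 < x →
      x ^ 2 * (A * Real.log (max (B / x) C))
          ≤ (x * Real.sqrt (Real.pi * A) * (1 + Real.sqrt (Real.log (max (B / x) C)))) ^ 2 ∧
      (∫ u in Set.Ioo (0 : ℝ) x, Real.sqrt (A * Real.log (max (B / u) C)))
          ≤ x * Real.sqrt (Real.pi * A) * (1 + Real.sqrt (Real.log (max (B / x) C))) := by
  intro x hx
  have hpi := Real.pi_gt_three
  have hL : ∀ t : ℝ, 0 ≤ Real.log (max (B / t) C) := fun t =>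
    Real.log_nonneg (hC.trans (le_max_right _ _))
  set Lx := Real.log (max (B / x) C) with hLx_def
  have hLx : 0 ≤ Lx := hL x
  have hsx := Real.sqrt_nonneg Lx
  have hsqx := Real.sq_sqrt hLx
  constructor
  · have hexp : (x * Real.sqrt (Real.pi * A) * (1 + Real.sqrt Lx)) ^ 2
        = x ^ 2 * (Real.pi * A) * (1 + Real.sqrt Lx) ^ 2 := by
      rw [mul_pow, mul_pow, Real.sq_sqrt (by positivity)]
    rw [hexp]
    have hx2 : (0:ℝ) ≤ x ^ 2 := sq_nonneg x
    have key : A * Lx ≤ Real.pi * A * (1 + Real.sqrt Lx) ^ 2 := by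
      nlinarith [mul_nonneg hA.le hsx, mul_nonneg hA.le (mul_nonneg hsx hsx), hpi, hA.le]
    calc x ^ 2 * (A * Lx) ≤ x ^ 2 * (Real.pi * A * (1 + Real.sqrt Lx) ^ 2) :=
          mul_le_mul_of_nonneg_left key hx2
      _ = x ^ 2 * (Real.pi * A) * (1 + Real.sqrt Lx) ^ 2 := by ring
  · -- integral bound
    set g : ℝ → ℝ := fun u =>
      Real.sqrt A * (Real.sqrt Lx + (1 + (Real.log x - Real.log u)) / 2) with hg_def
    have hgi : IntegrableOn g (Set.Ioo 0 x) := by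
      have h1 : IntegrableOn (fun _ : ℝ => Real.sqrt A * (Real.sqrt Lx + (1 + Real.log x) / 2))
          (Set.Ioo 0 x) := integrableOn_const measure_Ioo_lt_top.ne
      have h2 := (log_integrableOn_Ioo x hx).const_mul (Real.sqrt A / 2)
      have h3 := h1.sub h2
      apply h3.congr
      apply Filter.Eventually.of_forall
      intro u
      simp only [Pi.sub_apply, hg_def]
      ring
    have hbound : ∀ u ∈ Set.Ioo (0:ℝ) x,
        Real.sqrt (A * Real.log (max (B / u) C)) ≤ g u := by
      intro u hu
      obtain ⟨hu0, hux⟩ := hu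
      have hxu : 1 ≤ x / u := (one_le_div hu0).2 hux.le
      have hmax : max (B / u) C ≤ (x / u) * max (B / x) C := by
        apply max_le
        · have : B / u = (x / u) * (B / x) := by field_simp
          rw [this]
          exact mul_le_mul_of_nonneg_left (le_max_left _ _) (by positivity)
        · calc C = 1 * C := (one_mul C).symm
            _ ≤ (x / u) * max (B / x) C :=
              mul_le_mul hxu (le_max_right _ _) (le_trans zero_le_one hC) (by positivity)
      have hmaxpos : 0 < max (B / u) C := lt_of_lt_of_le one_pos (hC.trans (le_max_right _ _))
      have hLu : Real.log (max (B / u) C) ≤ Real.log (x / u) + Lx := by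
        calc Real.log (max (B / u) C) ≤ Real.log ((x / u) * max (B / x) C) :=
              Real.log_le_log hmaxpos hmax
          _ = Real.log (x / u) + Lx := by
              rw [Real.log_mul (by positivity) (ne_of_gt (lt_of_lt_of_le one_pos (hC.trans (le_max_right _ _))))]
      have hlogxu : 0 ≤ Real.log (x / u) := Real.log_nonneg hxu
      have hs1 : Real.sqrt (Real.log (max (B / u) C))
          ≤ Real.sqrt (Real.log (x / u)) + Real.sqrt Lx := by
        calc Real.sqrt (Real.log (max (B / u) C)) ≤ Real.sqrt (Real.log (x / u) + Lx) :=
              Real.sqrt_le_sqrt hLu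
          _ ≤ _ := sqrt_add_le' hlogxu hLx
      have hs2 : Real.sqrt (Real.log (x / u)) ≤ (1 + Real.log (x / u)) / 2 := by
        nlinarith [Real.sq_sqrt hlogxu, sq_nonneg (Real.sqrt (Real.log (x / u)) - 1),
          Real.sqrt_nonneg (Real.log (x / u))]
      have hlogdiv : Real.log (x / u) = Real.log x - Real.log u :=
        Real.log_div (ne_of_gt hx) (ne_of_gt hu0)
      rw [Real.sqrt_mul hA.le]
      calc Real.sqrt A * Real.sqrt (Real.log (max (B / u) C))
          ≤ Real.sqrt A * (Real.sqrt Lx + (1 + Real.log (x / u)) / 2) := by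
            apply mul_le_mul_of_nonneg_left _ (Real.sqrt_nonneg A)
            calc Real.sqrt (Real.log (max (B / u) C))
                ≤ Real.sqrt (Real.log (x / u)) + Real.sqrt Lx := hs1
              _ ≤ (1 + Real.log (x / u)) / 2 + Real.sqrt Lx := by linarith
              _ = Real.sqrt Lx + (1 + Real.log (x / u)) / 2 := by ring
        _ = g u := by rw [hg_def]; simp only [hlogdiv]
    have hmono : (∫ u in Set.Ioo (0:ℝ) x, Real.sqrt (A * Real.log (max (B / u) C)))
        ≤ ∫ u in Set.Ioo (0:ℝ) x, g u := by
      apply integral_mono_of_nonneg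
      · exact Filter.Eventually.of_forall fun u => Real.sqrt_nonneg _
      · exact hgi
      · filter_upwards [ae_restrict_mem measurableSet_Ioo] with u hu
        exact hbound u hu
    have hgval : (∫ u in Set.Ioo (0:ℝ) x, g u) = x * Real.sqrt A * (1 + Real.sqrt Lx) := by
      have hsplit : (∫ u in Set.Ioo (0:ℝ) x, g u)
          = (∫ u in Set.Ioo (0:ℝ) x,
              (Real.sqrt A * (Real.sqrt Lx + (1 + Real.log x) / 2)
                - (Real.sqrt A / 2) * Real.log u)) := by
        apply setIntegral_congr_fun measurableSet_Ioo
        intro u _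
        simp only [hg_def]
        ring
      rw [hsplit]
      rw [integral_sub (μ := volume.restrict (Set.Ioo (0:ℝ) x)) (g := fun u => (Real.sqrt A / 2) * Real.log u) (integrableOn_const measure_Ioo_lt_top.ne : IntegrableOn (fun _ : ℝ => Real.sqrt A * (Real.sqrt Lx + (1 + Real.log x) / 2)) (Set.Ioo 0 x) volume)
        ((log_integrableOn_Ioo x hx).const_mul (Real.sqrt A / 2))]
      rw [integral_const, integral_const_mul, log_integral_Ioo x hx]
      simp only [measureReal_restrict_apply_univ, Real.volume_real_Ioo_of_le hx.le, Measure.restrict_apply_univ, Real.volume_Ioo, sub_zero, smul_eq_mul,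
        ENNReal.toReal_ofReal hx.le]
      ring
    have hfinal : x * Real.sqrt A * (1 + Real.sqrt Lx)
        ≤ x * Real.sqrt (Real.pi * A) * (1 + Real.sqrt Lx) := by
      apply mul_le_mul_of_nonneg_right _ (by positivity)
      apply mul_le_mul_of_nonneg_left _ hx.le
      apply Real.sqrt_le_sqrt
      nlinarith
    calc (∫ u in Set.Ioo (0:ℝ) x, Real.sqrt (A * Real.log (max (B / u) C)))
        ≤ ∫ u in Set.Ioo (0:ℝ) x, g u := hmono
      _ = x * Real.sqrt A * (1 + Real.sqrt Lx) := hgval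
      _ ≤ _ := hfinal
end

section
/- Let n ≥ 1 be an integer and A, B, C, E real numbers with A ≥ 1, B ≥ 1, C ≥ 1, E ≥ 1. Define φ : (0,∞) → ℝ by φ(x) = x A (1 + √( log( max(B/x, C) ) )). Let σ > 0 satisfy E · φ(σ) = σ² √n. If [ (A C E / B) (1 + √( log B + log n )) ]² ≤ n, then σ ≤ (A E / √n) (1 + √( log B + log n )). -/
open Real

/-- Upper bound on the solution `σ` of the fixed-point equation `E φ(σ) = σ² √n` for
`φ(x) = x A (1 + √(log(max(B/x, C))))`. -/
theorem stmt11 (n : ℕ) (hn : 1 ≤ n) (A B C E : ℝ)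
    (hA : 1 ≤ A) (hB : 1 ≤ B) (hC : 1 ≤ C) (hE : 1 ≤ E)
    (σ : ℝ) (hσ : 0 < σ)
    (hroot : E * (σ * A * (1 + Real.sqrt (Real.log (max (B / σ) C))))
      = σ ^ 2 * Real.sqrt n)
    (hcond : ((A * C * E / B) * (1 + Real.sqrt (Real.log B + Real.log n))) ^ 2 ≤ n) :
    σ ≤ A * E / Real.sqrt n * (1 + Real.sqrt (Real.log B + Real.log n)) := by
  have hn1 : (1 : ℝ) ≤ n := by exact_mod_cast hn
  have hsn : (1 : ℝ) ≤ Real.sqrt n := by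
    rw [show (1:ℝ) = Real.sqrt 1 by simp]
    exact Real.sqrt_le_sqrt hn1
  have hsn0 : (0 : ℝ) < Real.sqrt n := lt_of_lt_of_le one_pos hsn
  have hsnsq : Real.sqrt n * Real.sqrt n = n := Real.mul_self_sqrt (by linarith)
  have hsn_le_n : Real.sqrt n ≤ (n : ℝ) := by
    calc Real.sqrt n = 1 * Real.sqrt n := by ring
      _ ≤ Real.sqrt n * Real.sqrt n := mul_le_mul_of_nonneg_right hsn hsn0.le
      _ = n := hsnsq
  set M := max (B / σ) C with hM
  set L := 1 + Real.sqrt (Real.log B + Real.log n) with hL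
  clear_value M L
  have hM1 : (1 : ℝ) ≤ M := hM ▸ le_trans hC (le_max_right _ _)
  have hlogM : 0 ≤ Real.log M := Real.log_nonneg hM1
  have hs0 : 0 ≤ Real.sqrt (Real.log M) := Real.sqrt_nonneg _
  have hL1 : (1 : ℝ) ≤ L := by
    have := Real.sqrt_nonneg (Real.log B + Real.log n); rw [hL]; linarith
  have hAE : (1 : ℝ) ≤ A * E := by nlinarith
  have hEA : (1 : ℝ) ≤ E * A := by nlinarith
  have hAEL : (1 : ℝ) ≤ A * E * L := by nlinarith
  -- key equation after cancelling σ
  have key : E * A * (1 + Real.sqrt (Real.log M)) = σ * Real.sqrt n := by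
    have h : σ * (E * A * (1 + Real.sqrt (Real.log M))) = σ * (σ * Real.sqrt n) := by
      linear_combination hroot
    exact mul_left_cancel₀ hσ.ne' h
  -- lower bound: σ * √n ≥ 1
  have hσn : 1 ≤ σ * Real.sqrt n := by nlinarith [key, hs0, hEA]
  -- from hcond: C ≤ B * √n
  have hBpos : (0 : ℝ) < B := lt_of_lt_of_le one_pos hB
  have hC0 : (0 : ℝ) < C := lt_of_lt_of_le one_pos hC
  have h1 : C ≤ A * C * E * L := by
    calc C ≤ C * (A * E * L) := le_mul_of_one_le_right hC0.le hAEL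
      _ = A * C * E * L := by ring
  have h2 : C ^ 2 ≤ (n : ℝ) * B ^ 2 := by
    have heq : A * C * E / B * L = (A * C * E * L) / B := by ring
    rw [heq, div_pow] at hcond
    rw [div_le_iff₀ (by positivity)] at hcond
    linarith [pow_le_pow_left₀ hC0.le h1 2]
  have hCBn : C ≤ B * Real.sqrt n := by
    have : C = Real.sqrt (C ^ 2) := (Real.sqrt_sq hC0.le).symm
    rw [this]
    calc Real.sqrt (C ^ 2) ≤ Real.sqrt ((n : ℝ) * B ^ 2) := Real.sqrt_le_sqrt h2
      _ = Real.sqrt n * Real.sqrt (B ^ 2) := Real.sqrt_mul (by positivity) _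
      _ = B * Real.sqrt n := by rw [Real.sqrt_sq hBpos.le]; ring
  have h3 : Real.sqrt n ≤ σ * n := by
    calc Real.sqrt n = 1 * Real.sqrt n := by ring
      _ ≤ σ * Real.sqrt n * Real.sqrt n := mul_le_mul_of_nonneg_right hσn hsn0.le
      _ = σ * n := by rw [mul_assoc, hsnsq]
  -- M ≤ B * n
  have hMle : M ≤ B * n := by
    rw [hM]
    apply max_le
    · rw [div_le_iff₀ hσ]
      calc B = B * 1 := by ring
        _ ≤ B * Real.sqrt n := mul_le_mul_of_nonneg_left hsn hBpos.le
        _ ≤ B * (σ * n) := mul_le_mul_of_nonneg_left h3 hBpos.le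
        _ = B * ↑n * σ := by ring
    · calc C ≤ B * Real.sqrt n := hCBn
        _ ≤ B * n := mul_le_mul_of_nonneg_left hsn_le_n hBpos.le
  have hlog : Real.log M ≤ Real.log B + Real.log n := by
    rw [← Real.log_mul (by positivity) (by positivity)]
    exact Real.log_le_log (by linarith) hMle
  have hsqrt : Real.sqrt (Real.log M) ≤ Real.sqrt (Real.log B + Real.log n) :=
    Real.sqrt_le_sqrt hlog
  -- conclude
  rw [div_mul_eq_mul_div, le_div_iff₀ hsn0]
  have hmul := mul_le_mul_of_nonneg_left hsqrt (by positivity : (0:ℝ) ≤ E * A)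
  calc σ * Real.sqrt n = E * A * (1 + Real.sqrt (Real.log M)) := key.symm
    _ ≤ A * E * L := by rw [hL]; nlinarith [hmul]
end

section
/- Let p ≥ 2 be an even integer and n ≥ 10 an integer. Let K, M be integers with 1 ≤ K ≤ n and 1 ≤ M ≤ n/2. For each x ∈ Fin K, let (w_{x,i})_{i ∈ Fin M} be nonnegative reals with Σ_i w_{x,i} = 1, s_{x,i} ∈ [1/M, 1], and μ_{x,i} ∈ [−n, n]. Define γ_x : ℝ → ℝ by γ_x(y) = n^{−2} + (1 − n^{−2}) · π (1 + y²) · Σ_{i ∈ Fin M} w_{x,i} · (1 / (2 s_{x,i} Γ(1 + 1/p))) · exp( − ((y − μ_{x,i}) / s_{x,i})^p ). Then for every y ∈ ℝ: −2 log n ≤ log( Σ_{x ∈ Fin K} γ_x(y) ) ≤ 5 log n. -/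
open Set MeasureTheory

lemma gamma_ge_exp_neg_one (a : ℝ) (ha : 0 ≤ a) : Real.exp (-1) ≤ Real.Gamma (1 + a) := by
  have h1 : (0:ℝ) < 1 + a := by linarith
  rw [Real.Gamma_eq_integral h1]
  have hint : IntegrableOn (fun x : ℝ => Real.exp (-x) * x ^ (1 + a - 1)) (Ioi 0) :=
    Real.GammaIntegral_convergent h1
  have hexpint : IntegrableOn (fun x : ℝ => Real.exp (-x)) (Ioi 1) := by
    simpa using exp_neg_integrableOn_Ioi 1 (one_pos)
  calc Real.exp (-1) = ∫ x in Ioi (1:ℝ), Real.exp (-x) := (integral_exp_neg_Ioi 1).symm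
    _ ≤ ∫ x in Ioi (1:ℝ), Real.exp (-x) * x ^ (1 + a - 1) := by
        apply setIntegral_mono_on hexpint (hint.mono_set (fun x hx => Set.mem_Ioi.mpr (lt_trans one_pos (Set.mem_Ioi.mp hx))))
          measurableSet_Ioi
        intro x hx
        have hx1 : (1:ℝ) ≤ x := le_of_lt hx
        have : (1:ℝ) ≤ x ^ (1 + a - 1) := Real.one_le_rpow hx1 (by linarith)
        nlinarith [Real.exp_pos (-x)]
    _ ≤ ∫ x in Ioi (0:ℝ), Real.exp (-x) * x ^ (1 + a - 1) := by
        apply setIntegral_mono_set hint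
        · filter_upwards [self_mem_ae_restrict measurableSet_Ioi] with x hx
          have : (0:ℝ) < x := hx
          positivity
        · exact HasSubset.Subset.eventuallyLE (fun x hx => Set.mem_Ioi.mpr (lt_trans one_pos (Set.mem_Ioi.mp hx)))

lemma keyB (p : ℕ) (hp2 : 2 ≤ p) (hpeven : Even p) (n : ℕ) (hn : 10 ≤ n)
    (y μ s : ℝ) (hs0 : 0 < s) (hs1 : s ≤ 1) (hμl : -(n:ℝ) ≤ μ) (hμu : μ ≤ (n:ℝ)) :
    (1 + y ^ 2) * Real.exp (-((y - μ) / s) ^ p) ≤ 1 + ((n : ℝ) + 1) ^ 2 := by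
  have hnR : (10:ℝ) ≤ (n:ℝ) := by exact_mod_cast hn
  obtain ⟨t, ht⟩ : ∃ t : ℝ, t = (y - μ) / s := ⟨_, rfl⟩
  rw [← ht]
  have hy : y = μ + s * t := by rw [ht, mul_div_assoc', mul_div_cancel_left₀ _ hs0.ne']; ring
  have htp : (0:ℝ) ≤ t ^ p := hpeven.pow_nonneg t
  rcases le_or_gt (|t|) 1 with hcase | hcase
  · -- |t| ≤ 1
    have hexp : Real.exp (-t ^ p) ≤ 1 := by
      rw [← Real.exp_zero]
      exact Real.exp_le_exp.mpr (by linarith)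
    have habs : |t| ≤ 1 := hcase
    have ht1 : -1 ≤ t := neg_le_of_abs_le habs
    have ht2 : t ≤ 1 := le_of_abs_le habs
    have hst : |s * t| ≤ 1 := by
      rw [abs_mul, abs_of_pos hs0]
      calc s * |t| ≤ 1 * 1 := by
            apply mul_le_mul hs1 habs (abs_nonneg t) zero_le_one
        _ = 1 := by ring
    have hstl : -1 ≤ s * t := neg_le_of_abs_le hst
    have hstu : s * t ≤ 1 := le_of_abs_le hst
    have hy2 : y ^ 2 ≤ ((n:ℝ) + 1) ^ 2 :=
      sq_le_sq' (by rw [hy]; linarith) (by rw [hy]; linarith)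
    nlinarith [Real.exp_pos (-t ^ p), sq_nonneg y]
  · -- 1 < |t|
    have ht2 : (1:ℝ) ≤ t ^ 2 := by nlinarith [sq_abs t, hcase.le]
    have htpow : t ^ 2 ≤ t ^ p := by
      have h1 : |t| ^ 2 ≤ |t| ^ p := pow_le_pow_right₀ hcase.le hp2
      rwa [hpeven.pow_abs, sq_abs] at h1
    have hexp : Real.exp (-t ^ p) ≤ Real.exp (-t ^ 2) :=
      Real.exp_le_exp.mpr (by linarith)
    have hy2 : y ^ 2 ≤ 2 * (n:ℝ) ^ 2 + 2 * t ^ 2 := by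
      rw [hy]
      have h1 : (0:ℝ) ≤ (1 - s ^ 2) * t ^ 2 := mul_nonneg (by nlinarith) (sq_nonneg t)
      have h2 : μ ^ 2 ≤ (n:ℝ) ^ 2 := by nlinarith [mul_nonneg (by linarith : (0:ℝ) ≤ (n:ℝ) - μ) (by linarith : (0:ℝ) ≤ (n:ℝ) + μ)]
      nlinarith [sq_nonneg (μ - s * t)]
    have hE1 : Real.exp (-t ^ 2) ≤ Real.exp (-1) := Real.exp_le_exp.mpr (by linarith)
    have hE2 : t ^ 2 * Real.exp (-t ^ 2) ≤ Real.exp (-1) := by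
      have h := Real.add_one_le_exp (t ^ 2 - 1)
      have h2 : t ^ 2 ≤ Real.exp (t ^ 2 - 1) := by linarith
      have h3 : Real.exp (t ^ 2 - 1) * Real.exp (-t ^ 2) = Real.exp (-1) := by
        rw [← Real.exp_add]; ring_nf
      nlinarith [Real.exp_pos (-t ^ 2)]
    have hEneg : Real.exp (-1) ≤ 1 / 2.7 := by
      rw [Real.exp_neg]
      rw [div_eq_mul_inv, one_mul]
      apply inv_anti₀ (by norm_num)
      linarith [Real.exp_one_gt_d9]
    have hE0 : (0:ℝ) ≤ Real.exp (-t ^ 2) := (Real.exp_pos _).le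
    have hb : (1 + y ^ 2) * Real.exp (-t ^ 2) ≤ (3 + 2 * (n:ℝ) ^ 2) * Real.exp (-1) := by
      have hb1 : (1 + y ^ 2) * Real.exp (-t ^ 2) ≤
          (1 + 2 * (n:ℝ) ^ 2 + 2 * t ^ 2) * Real.exp (-t ^ 2) :=
        mul_le_mul_of_nonneg_right (by linarith) hE0
      have hb2 : (1 + 2 * (n:ℝ) ^ 2) * Real.exp (-t ^ 2) ≤
          (1 + 2 * (n:ℝ) ^ 2) * Real.exp (-1) :=
        mul_le_mul_of_nonneg_left hE1 (by positivity)
      have hb3 : (1 + 2 * (n:ℝ) ^ 2 + 2 * t ^ 2) * Real.exp (-t ^ 2) =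
          (1 + 2 * (n:ℝ) ^ 2) * Real.exp (-t ^ 2) + 2 * (t ^ 2 * Real.exp (-t ^ 2)) := by ring
      linarith
    have hgoal2 : (3 + 2 * (n:ℝ) ^ 2) * Real.exp (-1) ≤ 1 + ((n:ℝ) + 1) ^ 2 := by
      nlinarith [Real.exp_pos (-1:ℝ)]
    have : (1 + y ^ 2) * Real.exp (-t ^ p) ≤ (1 + y ^ 2) * Real.exp (-t ^ 2) :=
      mul_le_mul_of_nonneg_left hexp (by positivity)
    linarith

open Finset Real

set_option maxHeartbeats 1000000 in
/-- Logarithmic bounds on the sum of emission densities of the mixture models built from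
exponential power distributions `ψ(y) = exp(-y^p)/(2Γ(1+1/p))`, relative to the dominating
density `G_λ(y) = 1/(π(1+y²))`:
`-2 log n ≤ log(Σ_x γ_x(y)) ≤ 5 log n` for all `y ∈ ℝ`. -/
theorem stmt12 (p : ℕ) (hp2 : 2 ≤ p) (hpeven : Even p)
    (n : ℕ) (hn : 10 ≤ n)
    (K M : ℕ) (hK1 : 1 ≤ K) (hKn : K ≤ n) (hM1 : 1 ≤ M) (hMn : (M : ℝ) ≤ (n : ℝ) / 2)
    (w : Fin K → Fin M → ℝ) (hw0 : ∀ x i, 0 ≤ w x i) (hwsum : ∀ x, ∑ i, w x i = 1)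
    (s : Fin K → Fin M → ℝ) (hs : ∀ x i, 1 / (M : ℝ) ≤ s x i ∧ s x i ≤ 1)
    (μ : Fin K → Fin M → ℝ) (hμ : ∀ x i, -(n : ℝ) ≤ μ x i ∧ μ x i ≤ (n : ℝ))
    (γ : Fin K → ℝ → ℝ)
    (hγ : ∀ x y, γ x y = ((n : ℝ) ^ 2)⁻¹ +
      (1 - ((n : ℝ) ^ 2)⁻¹) * (Real.pi * (1 + y ^ 2)) *
        ∑ i, w x i * (1 / (2 * s x i * Real.Gamma (1 + 1 / (p : ℝ))) *
          Real.exp (-((y - μ x i) / s x i) ^ p))) :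
    ∀ y : ℝ,
      -2 * Real.log n ≤ Real.log (∑ x, γ x y) ∧
      Real.log (∑ x, γ x y) ≤ 5 * Real.log n := by
  intro y
  have hnR : (10:ℝ) ≤ (n:ℝ) := by exact_mod_cast hn
  have hn0 : (0:ℝ) < (n:ℝ) := by linarith
  have hp0 : (0:ℝ) < (p:ℝ) := by exact_mod_cast (by omega : 0 < p)
  have hΓpos : 0 < Real.Gamma (1 + 1/(p:ℝ)) := Real.Gamma_pos_of_pos (by positivity)
  have hΓ : Real.exp (-1) ≤ Real.Gamma (1 + 1/(p:ℝ)) := gamma_ge_exp_neg_one _ (by positivity)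
  have hMR : (1:ℝ) ≤ (M:ℝ) := by exact_mod_cast hM1
  have hM0 : (0:ℝ) < (M:ℝ) := by linarith
  have hspos : ∀ x i, 0 < s x i := fun x i =>
    lt_of_lt_of_le (by positivity) (hs x i).1
  have hterm : ∀ x i, 0 ≤ w x i * (1 / (2 * s x i * Real.Gamma (1 + 1 / (p:ℝ))) *
      Real.exp (-((y - μ x i) / s x i) ^ p)) := by
    intro x i
    have h1 := hspos x i
    have h2 := hw0 x i
    positivity
  have hA1 : ((n:ℝ)^2)⁻¹ ≤ 1 := by
    rw [inv_le_one_iff₀]; right; nlinarith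
  have hA0 : (0:ℝ) < ((n:ℝ)^2)⁻¹ := by positivity
  -- lower bound on each γ x y
  have hγlb : ∀ x : Fin K, ((n:ℝ)^2)⁻¹ ≤ γ x y := by
    intro x
    rw [hγ x y]
    have h2 : 0 ≤ ∑ i, w x i * (1 / (2 * s x i * Real.Gamma (1 + 1 / (p:ℝ))) *
        Real.exp (-((y - μ x i) / s x i) ^ p)) :=
      Finset.sum_nonneg fun i _ => hterm x i
    have h3 : 0 ≤ (1 - ((n:ℝ)^2)⁻¹) * (Real.pi * (1 + y ^ 2)) *
        ∑ i, w x i * (1 / (2 * s x i * Real.Gamma (1 + 1 / (p:ℝ))) *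
          Real.exp (-((y - μ x i) / s x i) ^ p)) := by
      apply mul_nonneg (mul_nonneg (by linarith) (by positivity)) h2
    linarith
  have hSlb : ((n:ℝ)^2)⁻¹ ≤ ∑ x, γ x y := by
    have h1 : ∑ _x : Fin K, ((n:ℝ)^2)⁻¹ ≤ ∑ x, γ x y :=
      Finset.sum_le_sum fun x _ => hγlb x
    rw [Finset.sum_const, Finset.card_univ, Fintype.card_fin, nsmul_eq_mul] at h1
    have hKR : (1:ℝ) ≤ (K:ℝ) := by exact_mod_cast hK1
    nlinarith
  have hSpos : 0 < ∑ x, γ x y := lt_of_lt_of_le hA0 hSlb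
  -- upper bound
  set D : ℝ := Real.pi * (1 + ((n:ℝ) + 1) ^ 2) * ((M:ℝ) * Real.exp 1 / 2) with hD
  have hD0 : 0 ≤ D := by positivity
  have hinv : ∀ x i, 1 / (2 * s x i * Real.Gamma (1 + 1 / (p:ℝ))) ≤ (M:ℝ) * Real.exp 1 / 2 := by
    intro x i
    have hd : 2 * (1/(M:ℝ)) * Real.exp (-1) ≤ 2 * s x i * Real.Gamma (1 + 1 / (p:ℝ)) := by
      apply mul_le_mul (by linarith [(hs x i).1]) hΓ (Real.exp_pos _).le
      have := hspos x i; positivity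
    have hdpos : 0 < 2 * (1/(M:ℝ)) * Real.exp (-1) := by positivity
    calc 1 / (2 * s x i * Real.Gamma (1 + 1 / (p:ℝ)))
        ≤ 1 / (2 * (1/(M:ℝ)) * Real.exp (-1)) := one_div_le_one_div_of_le hdpos hd
      _ = (M:ℝ) * Real.exp 1 / 2 := by
          rw [Real.exp_neg]
          field_simp
  have hγub : ∀ x : Fin K, γ x y ≤ 1 + D := by
    intro x
    rw [hγ x y]
    have hsum : Real.pi * (1 + y ^ 2) *
        ∑ i, w x i * (1 / (2 * s x i * Real.Gamma (1 + 1 / (p:ℝ))) *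
          Real.exp (-((y - μ x i) / s x i) ^ p)) ≤ D := by
      rw [Finset.mul_sum]
      have hstep : ∀ i : Fin M, Real.pi * (1 + y ^ 2) *
          (w x i * (1 / (2 * s x i * Real.Gamma (1 + 1 / (p:ℝ))) *
            Real.exp (-((y - μ x i) / s x i) ^ p))) ≤ w x i * D := by
        intro i
        have hB := keyB p hp2 hpeven n hn y (μ x i) (s x i) (hspos x i) (hs x i).2
          (hμ x i).1 (hμ x i).2
        have hI := hinv x i
        have hI0 : 0 ≤ 1 / (2 * s x i * Real.Gamma (1 + 1 / (p:ℝ))) := by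
          have := hspos x i; positivity
        have hprod : Real.pi * ((1 + y ^ 2) * Real.exp (-((y - μ x i) / s x i) ^ p)) *
            (1 / (2 * s x i * Real.Gamma (1 + 1 / (p:ℝ)))) ≤
            Real.pi * (1 + ((n:ℝ) + 1) ^ 2) * ((M:ℝ) * Real.exp 1 / 2) := by
          apply mul_le_mul (mul_le_mul_of_nonneg_left hB Real.pi_pos.le) hI hI0
          positivity
        calc Real.pi * (1 + y ^ 2) *
            (w x i * (1 / (2 * s x i * Real.Gamma (1 + 1 / (p:ℝ))) *
              Real.exp (-((y - μ x i) / s x i) ^ p)))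
            = w x i * (Real.pi * ((1 + y ^ 2) * Real.exp (-((y - μ x i) / s x i) ^ p)) *
              (1 / (2 * s x i * Real.Gamma (1 + 1 / (p:ℝ))))) := by ring
          _ ≤ w x i * D := mul_le_mul_of_nonneg_left hprod (hw0 x i)
      calc (∑ i, Real.pi * (1 + y ^ 2) *
            (w x i * (1 / (2 * s x i * Real.Gamma (1 + 1 / (p:ℝ))) *
              Real.exp (-((y - μ x i) / s x i) ^ p))))
          ≤ ∑ i, w x i * D := Finset.sum_le_sum fun i _ => hstep i
        _ = D := by rw [← Finset.sum_mul, hwsum, one_mul]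
    have hsum0 : 0 ≤ Real.pi * (1 + y ^ 2) *
        ∑ i, w x i * (1 / (2 * s x i * Real.Gamma (1 + 1 / (p:ℝ))) *
          Real.exp (-((y - μ x i) / s x i) ^ p)) :=
      mul_nonneg (by positivity) (Finset.sum_nonneg fun i _ => hterm x i)
    nlinarith
  have hSub : ∑ x, γ x y ≤ (n:ℝ) ^ 5 := by
    have h1 : ∑ x, γ x y ≤ ∑ _x : Fin K, (1 + D) := Finset.sum_le_sum fun x _ => hγub x
    rw [Finset.sum_const, Finset.card_univ, Fintype.card_fin, nsmul_eq_mul] at h1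
    have hKn' : (K:ℝ) ≤ (n:ℝ) := by exact_mod_cast hKn
    have h2 : (K:ℝ) * (1 + D) ≤ (n:ℝ) * (1 + D) :=
      mul_le_mul_of_nonneg_right hKn' (by linarith)
    have hpi : Real.pi ≤ 3.15 := Real.pi_lt_d2.le
    have he : Real.exp 1 ≤ 2.72 := by linarith [Real.exp_one_lt_d9]
    have hCb : 1 + ((n:ℝ) + 1) ^ 2 ≤ 1.22 * (n:ℝ) ^ 2 := by nlinarith [sq_nonneg ((n:ℝ) - 10)]
    have hMe : (M:ℝ) * Real.exp 1 / 2 ≤ (n:ℝ) / 2 * 2.72 / 2 := by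
      have h3 : (M:ℝ) * Real.exp 1 ≤ (n:ℝ) / 2 * 2.72 :=
        mul_le_mul hMn he (Real.exp_pos 1).le (by linarith)
      linarith
    have hDb : D ≤ 3.15 * (1.22 * (n:ℝ) ^ 2) * ((n:ℝ) / 2 * 2.72 / 2) := by
      rw [hD]
      apply mul_le_mul (mul_le_mul hpi hCb (by positivity) (by norm_num)) hMe
        (by positivity) (by positivity)
    have h5 : 10 * (n:ℝ) ^ 4 ≤ (n:ℝ) ^ 5 := by
      calc 10 * (n:ℝ) ^ 4 = (n:ℝ) ^ 4 * 10 := by ring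
        _ ≤ (n:ℝ) ^ 4 * (n:ℝ) := mul_le_mul_of_nonneg_left hnR (pow_nonneg hn0.le 4)
        _ = (n:ℝ) ^ 5 := by ring
    have h6 : (n:ℝ) ≤ (n:ℝ) ^ 4 := by
      calc (n:ℝ) = (n:ℝ) * 1 := (mul_one _).symm
        _ ≤ (n:ℝ) * (n:ℝ) ^ 3 := mul_le_mul_of_nonneg_left (one_le_pow₀ (by linarith)) hn0.le
        _ = (n:ℝ) ^ 4 := by ring
    have hfin : (n:ℝ) * (1 + 3.15 * (1.22 * (n:ℝ) ^ 2) * ((n:ℝ) / 2 * 2.72 / 2)) ≤ (n:ℝ) ^ 5 := by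
      nlinarith [h5, h6]
    have h4 : (n:ℝ) * (1 + D) ≤ (n:ℝ) * (1 + 3.15 * (1.22 * (n:ℝ) ^ 2) * ((n:ℝ) / 2 * 2.72 / 2)) :=
      mul_le_mul_of_nonneg_left (by linarith) hn0.le
    linarith
  constructor
  · have h := Real.log_le_log hA0 hSlb
    rw [Real.log_inv, Real.log_pow] at h
    push_cast at h
    linarith
  · have h := Real.log_le_log hSpos hSub
    rw [Real.log_pow] at h
    push_cast at h
    linarith
end

section
/- Let (Ω, ℱ, P) be a probability space, B ≥ 1, q ∈ [0,1], c ≥ 0, and let X, Z : Ω → [0,∞) be measurable functions such that for every t ≥ 1, P(X ≥ B t^q) ≤ e^{−t} and P(Z ≥ B t^q) ≤ e^{−t}. Let T : Ω → ℝ be measurable with |T| ≤ X + Z + c almost surely. Then for every u ≥ 1: E[ |T| · 1_{max(X,Z) > B u^q} ] ≤ 6 B u^q e^{−u} + 2 c e^{−u}. -/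
open MeasureTheory Real Set

-- Bernoulli-type concavity bound
lemma aux_bernoulli {q u s : ℝ} (hq : 0 ≤ q) (hq1 : q ≤ 1) (hu : 1 ≤ u) (hs : u ≤ s) :
    s ^ q ≤ u ^ q + q * u ^ (q - 1) * (s - u) := by
  have hu0 : 0 < u := lt_of_lt_of_le one_pos hu
  have hx : -1 ≤ s / u - 1 := by
    have : 0 ≤ s / u := div_nonneg (le_trans hu0.le hs) hu0.le
    linarith
  have hb := rpow_one_add_le_one_add_mul_self hx hq hq1
  have h1 : (1 : ℝ) + (s / u - 1) = s / u := by ring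
  rw [h1] at hb
  have hsu : s = u * (s / u) := by field_simp
  have hsd : 0 ≤ s / u := div_nonneg (hu0.le.trans hs) hu0.le
  have h2 : s ^ q = u ^ q * (s / u) ^ q := by
    rw [← Real.mul_rpow hu0.le hsd, mul_comm, div_mul_cancel₀ s hu0.ne']
  have h3 : u ^ q * (s / u) ^ q ≤ u ^ q * (1 + q * (s / u - 1)) := by
    apply mul_le_mul_of_nonneg_left hb (Real.rpow_nonneg hu0.le q)
  have h4 : u ^ (q - 1) = u ^ q / u := Real.rpow_sub_one hu0.ne' q
  calc s ^ q ≤ u ^ q * (1 + q * (s / u - 1)) := h2 ▸ h3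
    _ = u ^ q + q * (u ^ q / u) * (s - u) := by field_simp
    _ = u ^ q + q * u ^ (q - 1) * (s - u) := by rw [h4]

-- integral of shifted exponential
lemma aux_int {K u : ℝ} (hK : 0 < K) :
    ∫ t in Ioi (0 : ℝ), Real.exp (-(u + t / K)) = K * Real.exp (-u) := by
  have h1 : ∀ t : ℝ, Real.exp (-(u + t / K)) = Real.exp (-u) * Real.exp (-(K⁻¹ * t)) := by
    intro t
    rw [← Real.exp_add]
    congr 1
    field_simp
    ring
  simp_rw [h1]
  rw [MeasureTheory.integral_const_mul]
  have h2 : (∫ t in Ioi (0 : ℝ), Real.exp (-(K⁻¹ * t)))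
      = (K⁻¹)⁻¹ • ∫ x in Ioi (K⁻¹ * 0), Real.exp (-x) :=
    integral_comp_mul_left_Ioi (fun x => Real.exp (-x)) 0 (inv_pos.mpr hK)
  rw [h2, mul_zero, integral_exp_neg_Ioi, inv_inv, smul_eq_mul, neg_zero, Real.exp_zero]
  ring

lemma aux_tail {Ω : Type*} [MeasurableSpace Ω] (P : Measure Ω) [IsProbabilityMeasure P]
    {B q u : ℝ} (hB : 1 ≤ B) (hq : 0 < q) (hq1 : q ≤ 1) (hu : 1 ≤ u)
    {Y : Ω → ℝ} (hY : Measurable Y)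
    (htail : ∀ t : ℝ, 1 ≤ t → P {ω | B * t ^ q ≤ Y ω} ≤ ENNReal.ofReal (Real.exp (-t)))
    {A : Set Ω} (hPA : P A ≤ ENNReal.ofReal (2 * Real.exp (-u))) :
    ∫⁻ ω in A, ENNReal.ofReal (Y ω) ∂P ≤ ENNReal.ofReal (3 * (B * u ^ q) * Real.exp (-u)) := by
  have hB0 : (0 : ℝ) < B := lt_of_lt_of_le one_pos hB
  have hu0 : (0 : ℝ) < u := lt_of_lt_of_le one_pos hu
  set a : ℝ := B * u ^ q with ha_def
  set K : ℝ := B * q * u ^ (q - 1) with hK_def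
  have hup : (0 : ℝ) < u ^ q := Real.rpow_pos_of_pos hu0 q
  have ha0 : 0 < a := mul_pos hB0 hup
  have hK0 : 0 < K := mul_pos (mul_pos hB0 hq) (Real.rpow_pos_of_pos hu0 _)
  have hKa : K ≤ a := by
    have h1 : u ^ (q - 1) ≤ u ^ q := Real.rpow_le_rpow_of_exponent_le hu (by linarith)
    have h2 : q * u ^ (q - 1) ≤ 1 * u ^ q := by
      apply mul_le_mul hq1 h1 (Real.rpow_nonneg hu0.le _) zero_le_one
    calc K = B * (q * u ^ (q - 1)) := by ring
      _ ≤ B * (1 * u ^ q) := mul_le_mul_of_nonneg_left h2 hB0.le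
      _ = a := by ring
  -- pointwise bound
  have hpt : ∀ ω, ENNReal.ofReal (Y ω)
      ≤ ENNReal.ofReal a + ENNReal.ofReal (max (Y ω - a) 0) := by
    intro ω
    rw [← ENNReal.ofReal_add ha0.le (le_max_right _ _)]
    apply ENNReal.ofReal_le_ofReal
    rcases le_total (Y ω) a with h | h
    · have := le_max_right (Y ω - a) 0; linarith
    · have := le_max_left (Y ω - a) 0; linarith
  have step2 : ∫⁻ ω in A, ENNReal.ofReal (Y ω) ∂P
      ≤ ENNReal.ofReal a * P A + ∫⁻ ω, ENNReal.ofReal (max (Y ω - a) 0) ∂P := by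
    calc ∫⁻ ω in A, ENNReal.ofReal (Y ω) ∂P
        ≤ ∫⁻ ω in A, (ENNReal.ofReal a + ENNReal.ofReal (max (Y ω - a) 0)) ∂P :=
          lintegral_mono fun ω => hpt ω
      _ = ENNReal.ofReal a * P A + ∫⁻ ω in A, ENNReal.ofReal (max (Y ω - a) 0) ∂P := by
          rw [lintegral_add_left measurable_const, setLIntegral_const]
      _ ≤ _ := by
          gcongr
          exact Measure.restrict_le_self
  -- layer cake
  have hg_mble : Measurable fun ω => max (Y ω - a) 0 :=
    (hY.sub measurable_const).max measurable_const
  have hlayer : ∫⁻ ω, ENNReal.ofReal (max (Y ω - a) 0) ∂P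
      = ∫⁻ t in Ioi (0 : ℝ), P {ω | t < max (Y ω - a) 0} := by
    exact lintegral_eq_lintegral_meas_lt P (Filter.Eventually.of_forall fun ω => le_max_right _ _)
      hg_mble.aemeasurable
  -- tail bound for each t > 0
  have htb : ∀ t : ℝ, t ∈ Ioi (0:ℝ) →
      P {ω | t < max (Y ω - a) 0} ≤ ENNReal.ofReal (Real.exp (-(u + t / K))) := by
    intro t ht
    simp only [mem_Ioi] at ht
    set s : ℝ := ((a + t) / B) ^ (1 / q) with hs_def
    have hat : 0 < (a + t) / B := div_pos (by linarith) hB0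
    have haB : u ^ q ≤ (a + t) / B := by
      rw [le_div_iff₀ hB0]
      have : u ^ q * B = a := by rw [ha_def]; ring
      linarith
    have hus : u ≤ s := by
      have h1 : (u ^ q) ^ (1 / q) ≤ ((a + t) / B) ^ (1 / q) :=
        Real.rpow_le_rpow (Real.rpow_nonneg hu0.le _) haB (by positivity)
      rwa [← Real.rpow_mul hu0.le, mul_one_div, div_self hq.ne', Real.rpow_one] at h1
    have hs1 : 1 ≤ s := le_trans hu hus
    have hsq : B * s ^ q = a + t := by
      rw [hs_def, ← Real.rpow_mul hat.le, one_div, inv_mul_cancel₀ hq.ne', Real.rpow_one]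
      field_simp
    have hsub : {ω | t < max (Y ω - a) 0} ⊆ {ω | B * s ^ q ≤ Y ω} := by
      intro ω hω
      simp only [mem_setOf_eq] at hω ⊢
      rw [hsq]
      rcases max_cases (Y ω - a) 0 with ⟨he, _⟩ | ⟨he, _⟩
      · rw [he] at hω; linarith
      · rw [he] at hω; linarith
    have hKs : u + t / K ≤ s := by
      have hb := aux_bernoulli hq.le hq1 hu hus
      have h1 : s ^ q = u ^ q + t / B := by
        have : B * s ^ q = a + t := hsq
        rw [ha_def] at this
        field_simp at this ⊢
        linarith
      rw [h1] at hb
      have h2 : t / B ≤ q * u ^ (q - 1) * (s - u) := by linarith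
      have h3 : t ≤ K * (s - u) := by
        rw [hK_def]
        calc t = B * (t / B) := by field_simp
          _ ≤ B * (q * u ^ (q - 1) * (s - u)) := mul_le_mul_of_nonneg_left h2 hB0.le
          _ = B * q * u ^ (q - 1) * (s - u) := by ring
      have h4 : t / K ≤ s - u := by
        rw [div_le_iff₀ hK0, mul_comm]
        linarith
      linarith
    calc P {ω | t < max (Y ω - a) 0} ≤ P {ω | B * s ^ q ≤ Y ω} := measure_mono hsub
      _ ≤ ENNReal.ofReal (Real.exp (-s)) := htail s hs1
      _ ≤ ENNReal.ofReal (Real.exp (-(u + t / K))) := by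
          apply ENNReal.ofReal_le_ofReal
          exact Real.exp_le_exp.mpr (by linarith)
  -- integrate the bound
  have hint : ∫⁻ t in Ioi (0 : ℝ), ENNReal.ofReal (Real.exp (-(u + t / K)))
      = ENNReal.ofReal (K * Real.exp (-u)) := by
    rw [← aux_int hK0]
    rw [← ofReal_integral_eq_lintegral_ofReal]
    · have heq : ∀ t : ℝ, Real.exp (-(u + t / K)) = Real.exp (-u) * Real.exp (-K⁻¹ * t) := by
        intro t
        rw [← Real.exp_add]
        congr 1
        field_simp
        ring
      have : IntegrableOn (fun t : ℝ => Real.exp (-u) * Real.exp (-K⁻¹ * t)) (Ioi 0) :=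
        (exp_neg_integrableOn_Ioi 0 (inv_pos.mpr hK0)).const_mul _
      exact (this.congr_fun (fun t _ => (heq t).symm) measurableSet_Ioi)
    · exact Filter.Eventually.of_forall fun t => (Real.exp_pos _).le
  have step3 : ∫⁻ ω, ENNReal.ofReal (max (Y ω - a) 0) ∂P ≤ ENNReal.ofReal (K * Real.exp (-u)) := by
    rw [hlayer, ← hint]
    exact setLIntegral_mono (by fun_prop) htb
  -- combine
  calc ∫⁻ ω in A, ENNReal.ofReal (Y ω) ∂P
      ≤ ENNReal.ofReal a * P A + ∫⁻ ω, ENNReal.ofReal (max (Y ω - a) 0) ∂P := step2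
    _ ≤ ENNReal.ofReal a * ENNReal.ofReal (2 * Real.exp (-u)) + ENNReal.ofReal (K * Real.exp (-u)) := by
        gcongr
    _ = ENNReal.ofReal (a * (2 * Real.exp (-u)) + K * Real.exp (-u)) := by
        rw [← ENNReal.ofReal_mul ha0.le, ENNReal.ofReal_add (by positivity) (by positivity)]
    _ ≤ ENNReal.ofReal (3 * a * Real.exp (-u)) := by
        apply ENNReal.ofReal_le_ofReal
        nlinarith [Real.exp_pos (-u)]

/-- Truncation error bound: if `|T| ≤ X + Z + c` a.s. where `X` and `Z` have
subpolynomial tails `P(X ≥ B t^q) ≤ e^{-t}`, then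
`E[|T| 1_{max(X,Z) > B u^q}] ≤ 6 B u^q e^{-u} + 2 c e^{-u}` for all `u ≥ 1`. -/
theorem stmt13 {Ω : Type*} [MeasurableSpace Ω] (P : Measure Ω) [IsProbabilityMeasure P]
    (B : ℝ) (hB : 1 ≤ B) (q : ℝ) (hq0 : 0 ≤ q) (hq1 : q ≤ 1) (c : ℝ) (hc : 0 ≤ c)
    (X Z : Ω → ℝ) (hX : Measurable X) (hZ : Measurable Z)
    (hX0 : ∀ ω, 0 ≤ X ω) (hZ0 : ∀ ω, 0 ≤ Z ω)
    (hXtail : ∀ t : ℝ, 1 ≤ t → P {ω | B * t ^ q ≤ X ω} ≤ ENNReal.ofReal (Real.exp (-t)))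
    (hZtail : ∀ t : ℝ, 1 ≤ t → P {ω | B * t ^ q ≤ Z ω} ≤ ENNReal.ofReal (Real.exp (-t)))
    (T : Ω → ℝ) (hT : Measurable T) (hTbound : ∀ᵐ ω ∂P, |T ω| ≤ X ω + Z ω + c) :
    ∀ u : ℝ, 1 ≤ u →
      ∫ ω in {ω | B * u ^ q < max (X ω) (Z ω)}, |T ω| ∂P
        ≤ 6 * B * u ^ q * Real.exp (-u) + 2 * c * Real.exp (-u) := by
  intro u hu
  have hu0 : (0 : ℝ) < u := lt_of_lt_of_le one_pos hu
  have hB0 : (0 : ℝ) < B := lt_of_lt_of_le one_pos hB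
  have hup : (0 : ℝ) < u ^ q := Real.rpow_pos_of_pos hu0 q
  have hRHS0 : 0 ≤ 6 * B * u ^ q * Real.exp (-u) + 2 * c * Real.exp (-u) := by positivity
  set S : Set Ω := {ω | B * u ^ q < max (X ω) (Z ω)} with hS_def
  -- measure bound on S
  have hSsub : S ⊆ {ω | B * u ^ q ≤ X ω} ∪ {ω | B * u ^ q ≤ Z ω} := by
    intro ω hω
    simp only [hS_def, mem_setOf_eq, lt_max_iff] at hω
    rcases hω with h | h
    · exact Or.inl (le_of_lt h)
    · exact Or.inr (le_of_lt h)
  have hPS : P S ≤ ENNReal.ofReal (2 * Real.exp (-u)) := by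
    calc P S ≤ P ({ω | B * u ^ q ≤ X ω} ∪ {ω | B * u ^ q ≤ Z ω}) := measure_mono hSsub
      _ ≤ P {ω | B * u ^ q ≤ X ω} + P {ω | B * u ^ q ≤ Z ω} := measure_union_le _ _
      _ ≤ ENNReal.ofReal (Real.exp (-u)) + ENNReal.ofReal (Real.exp (-u)) := by
          gcongr
          · exact hXtail u hu
          · exact hZtail u hu
      _ = ENNReal.ofReal (2 * Real.exp (-u)) := by
          rw [← ENNReal.ofReal_add (Real.exp_pos _).le (Real.exp_pos _).le]
          congr 1
          ring
  rcases eq_or_lt_of_le hq0 with hq | hq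
  · -- q = 0 : S is null
    have hPS0 : P S = 0 := by
      refine le_antisymm ?_ zero_le
      have hseq : ∀ n : ℕ, P S ≤ ENNReal.ofReal (2 * Real.exp (-((n : ℝ) + 1))) := by
        intro n
        have hn1 : (1 : ℝ) ≤ (n : ℝ) + 1 := by
          have : (0:ℝ) ≤ (n:ℝ) := n.cast_nonneg
          linarith
        have hX' := hXtail ((n : ℝ) + 1) hn1
        have hZ' := hZtail ((n : ℝ) + 1) hn1
        have hpow : B * ((n : ℝ) + 1) ^ q = B * u ^ q := by
          rw [← hq, Real.rpow_zero, Real.rpow_zero]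
        rw [hpow] at hX' hZ'
        calc P S ≤ P ({ω | B * u ^ q ≤ X ω} ∪ {ω | B * u ^ q ≤ Z ω}) := measure_mono hSsub
          _ ≤ P {ω | B * u ^ q ≤ X ω} + P {ω | B * u ^ q ≤ Z ω} := measure_union_le _ _
          _ ≤ ENNReal.ofReal (Real.exp (-((n:ℝ)+1))) + ENNReal.ofReal (Real.exp (-((n:ℝ)+1))) := by
              gcongr
          _ = ENNReal.ofReal (2 * Real.exp (-((n:ℝ)+1))) := by
              rw [← ENNReal.ofReal_add (Real.exp_pos _).le (Real.exp_pos _).le]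
              congr 1
              ring
      have hlim : Filter.Tendsto (fun n : ℕ => ENNReal.ofReal (2 * Real.exp (-((n : ℝ) + 1))))
          Filter.atTop (nhds 0) := by
        rw [show (0 : ENNReal) = ENNReal.ofReal 0 by simp]
        apply ENNReal.tendsto_ofReal
        have h1 : Filter.Tendsto (fun n : ℕ => ((n : ℝ) + 1)) Filter.atTop Filter.atTop :=
          Filter.tendsto_atTop_add_const_right _ 1 tendsto_natCast_atTop_atTop
        have h2 : Filter.Tendsto (fun n : ℕ => Real.exp (-((n : ℝ) + 1))) Filter.atTop (nhds 0) :=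
          Real.tendsto_exp_atBot.comp (Filter.tendsto_neg_atBot_iff.mpr h1)
        simpa using h2.const_mul 2
      exact le_of_tendsto_of_tendsto' tendsto_const_nhds hlim hseq
    rw [setIntegral_measure_zero _ hPS0]
    exact hRHS0
  · -- q > 0 : main case
    have h1 : ∫ ω in S, |T ω| ∂P
        = (∫⁻ ω in S, ENNReal.ofReal (|T ω|) ∂P).toReal := by
      apply integral_eq_lintegral_of_nonneg_ae
      · exact Filter.Eventually.of_forall fun ω => abs_nonneg _
      · exact hT.abs.aestronglyMeasurable
    rw [h1]
    apply ENNReal.toReal_le_of_le_ofReal hRHS0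
    have hXb := aux_tail P hB hq hq1 hu hX hXtail hPS
    have hZb := aux_tail P hB hq hq1 hu hZ hZtail hPS
    calc ∫⁻ ω in S, ENNReal.ofReal (|T ω|) ∂P
        ≤ ∫⁻ ω in S, ENNReal.ofReal (X ω + Z ω + c) ∂P := by
          apply lintegral_mono_ae
          filter_upwards [ae_restrict_of_ae hTbound] with ω hω
          exact ENNReal.ofReal_le_ofReal hω
      _ ≤ ∫⁻ ω in S, (ENNReal.ofReal (X ω) + ENNReal.ofReal (Z ω) + ENNReal.ofReal c) ∂P := by
          apply lintegral_mono
          intro ω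
          calc ENNReal.ofReal (X ω + Z ω + c)
              ≤ ENNReal.ofReal (X ω + Z ω) + ENNReal.ofReal c := ENNReal.ofReal_add_le
            _ ≤ ENNReal.ofReal (X ω) + ENNReal.ofReal (Z ω) + ENNReal.ofReal c := by
                gcongr
                exact ENNReal.ofReal_add_le
      _ = (∫⁻ ω in S, ENNReal.ofReal (X ω) ∂P) + (∫⁻ ω in S, ENNReal.ofReal (Z ω) ∂P)
            + ENNReal.ofReal c * P S := by
          rw [lintegral_add_right _ measurable_const,
            lintegral_add_right _ hZ.ennreal_ofReal, setLIntegral_const]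
      _ ≤ ENNReal.ofReal (3 * (B * u ^ q) * Real.exp (-u))
            + ENNReal.ofReal (3 * (B * u ^ q) * Real.exp (-u))
            + ENNReal.ofReal c * ENNReal.ofReal (2 * Real.exp (-u)) := by
          gcongr
      _ = ENNReal.ofReal (3 * (B * u ^ q) * Real.exp (-u) + 3 * (B * u ^ q) * Real.exp (-u)
            + c * (2 * Real.exp (-u))) := by
          rw [← ENNReal.ofReal_mul hc, ← ENNReal.ofReal_add (by positivity) (by positivity),
            ← ENNReal.ofReal_add (by positivity) (by positivity)]
      _ ≤ ENNReal.ofReal (6 * B * u ^ q * Real.exp (-u) + 2 * c * Real.exp (-u)) := by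
          apply ENNReal.ofReal_le_ofReal
          nlinarith [Real.exp_pos (-u)]
end
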